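/- arXiv:math/0503651 — 3 statements merged into one kernel-verified Lean document; each statement's English description precedes it below -/
import Mathlib

section
/- If φ belongs to the class Φ, then both the derivative φ' and the function x ↦ (φ(x) − φ(0))/x are concave on (0, ∞). -/
open Real

/-- The class `Φ`: `φ : [0,∞) → ℝ` continuous and convex on `[0,∞)`, twice differentiable on
`(0,∞)` (with first and second derivatives `φ'` and `φ''`), and either `φ` is affine or
`φ'' > 0` on `(0,∞)` and `1/φ''` is concave on `(0,∞)`. -/
structure MemPhiClass (φ φ' φ'' : ℝ → ℝ) : Prop where
  cont : ContinuousOn φ (Set.Ici 0)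
  convex : ConvexOn ℝ (Set.Ici 0) φ
  deriv1 : ∀ x ∈ Set.Ioi (0 : ℝ), HasDerivAt φ (φ' x) x
  deriv2 : ∀ x ∈ Set.Ioi (0 : ℝ), HasDerivAt φ' (φ'' x) x
  affine_or : (∃ a b : ℝ, ∀ x ∈ Set.Ici (0 : ℝ), φ x = a * x + b) ∨
    ((∀ x ∈ Set.Ioi (0 : ℝ), 0 < φ'' x) ∧
      ConcaveOn ℝ (Set.Ioi 0) (fun x => 1 / φ'' x))

/-- A positive concave function on `(0,∞)` is nondecreasing. -/
lemma concave_pos_monotoneOn {g : ℝ → ℝ} (hc : ConcaveOn ℝ (Set.Ioi 0) g)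
    (hp : ∀ x ∈ Set.Ioi (0:ℝ), 0 < g x) : MonotoneOn g (Set.Ioi 0) := by
  intro x hx y hy hxy
  rcases eq_or_lt_of_le hxy with rfl | hlt
  · exact le_refl _
  by_contra hgy
  push_neg at hgy
  have hx0 : (0:ℝ) < x := hx
  have hy0 : (0:ℝ) < y := hy
  have hgy0 : 0 < g y := hp y hy
  have hd0 : 0 < g x - g y := by linarith
  set z : ℝ := (y * g x - x * g y) / (g x - g y) + 1 with hzdef
  clear_value z
  have hyz : y < z := by
    have h1 : y < (y * g x - x * g y) / (g x - g y) := by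
      rw [lt_div_iff₀ hd0]
      nlinarith
    linarith
  have hxz : x < z := lt_trans hlt hyz
  have hzx0 : 0 < z - x := by linarith
  have hz0 : (0:ℝ) < z := lt_trans hy0 hyz
  have hgz : 0 < g z := hp z hz0
  set p : ℝ := (z - y) / (z - x) with hpdef
  set q : ℝ := (y - x) / (z - x) with hqdef
  clear_value p q
  have hp0 : 0 ≤ p := by rw [hpdef]; exact div_nonneg (by linarith) (by linarith)
  have hq0 : 0 < q := by rw [hqdef]; exact div_pos (by linarith) hzx0
  have hpq : p + q = 1 := by
    rw [hpdef, hqdef]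
    field_simp
    ring
  have hcomb : p • x + q • z = y := by
    simp only [smul_eq_mul, hpdef, hqdef]
    field_simp
    ring
  have hineq := hc.2 hx (Set.mem_Ioi.2 hz0) hp0 hq0.le hpq
  rw [hcomb] at hineq
  simp only [smul_eq_mul] at hineq
  -- p * g x + q * g z ≤ g y, with q * g z > 0, so p * g x < g y
  have hkey : (z - y) * g x < g y * (z - x) := by
    have h2 : p * g x < g y := by nlinarith
    have h3 : (z - y) * g x / (z - x) < g y := by
      rw [hpdef] at h2; rw [div_mul_eq_mul_div] at h2; exact h2
    exact (div_lt_iff₀ hzx0).mp h3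
  have hz_lt : z < (y * g x - x * g y) / (g x - g y) := by
    rw [lt_div_iff₀ hd0]; nlinarith
  linarith

/-- **Proposition 2** (Boucheron–Bousquet–Lugosi–Massart). If `φ ∈ Φ`, then both `φ'` and
`x ↦ (φ(x) - φ(0))/x` are concave on `(0, ∞)`. -/
theorem proposition2_concavity
    (φ φ' φ'' : ℝ → ℝ) (hφ : MemPhiClass φ φ' φ'') :
    ConcaveOn ℝ (Set.Ioi 0) φ' ∧
      ConcaveOn ℝ (Set.Ioi 0) (fun x => (φ x - φ 0) / x) := by
  obtain ⟨hcont, hconv, hd1, hd2, hor⟩ := hφ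
  rcases hor with ⟨a, b, hab⟩ | ⟨hpos, hconc⟩
  · -- affine case
    have hconst : ∀ x ∈ Set.Ioi (0:ℝ), φ' x = a := by
      intro x hx
      have hev : φ =ᶠ[nhds x] fun y => a * y + b :=
        Filter.eventuallyEq_of_mem (Ioi_mem_nhds hx)
          (fun y (hy : y ∈ Set.Ioi (0:ℝ)) => hab y (Set.mem_Ici.2 (le_of_lt (Set.mem_Ioi.1 hy))))
      have h2 : HasDerivAt (fun y => a * y + b) a x := by
        simpa using ((hasDerivAt_id x).const_mul a).add_const b
      have h1 : HasDerivAt φ a x := h2.congr_of_eventuallyEq hev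
      exact (hd1 x hx).unique h1
    constructor
    · refine ⟨convex_Ioi 0, fun x hx y hy p q hp hq hpq => ?_⟩
      have hm : p • x + q • y ∈ Set.Ioi (0:ℝ) := (convex_Ioi 0) hx hy hp hq hpq
      rw [hconst _ hx, hconst _ hy, hconst _ hm]
      simp only [smul_eq_mul]
      have : p * a + q * a = a := by rw [← add_mul, hpq, one_mul]
      linarith
    · refine ⟨convex_Ioi 0, fun x hx y hy p q hp hq hpq => ?_⟩
      have hm : p • x + q • y ∈ Set.Ioi (0:ℝ) := (convex_Ioi 0) hx hy hp hq hpq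
      have hval : ∀ t ∈ Set.Ioi (0:ℝ), (φ t - φ 0) / t = a := by
        intro t ht
        have ht0 : (0:ℝ) < t := ht
        rw [hab t ht0.le, hab 0 Set.self_mem_Ici]
        field_simp
        ring
      simp only
      rw [hval _ hx, hval _ hy, hval _ hm]
      simp only [smul_eq_mul]
      have : p * a + q * a = a := by rw [← add_mul, hpq, one_mul]
      linarith
  · -- main case
    have hanti : AntitoneOn φ'' (Set.Ioi 0) := by
      have hmono := concave_pos_monotoneOn hconc
        (fun x hx => one_div_pos.mpr (hpos x hx))
      intro x hx y hy hxy
      have h1 := hmono hx hy hxy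
      exact (one_div_le_one_div (hpos x hx) (hpos y hy)).mp h1
    have hφ'cont : ContinuousOn φ' (Set.Ioi 0) :=
      fun x hx => ((hd2 x hx).continuousAt).continuousWithinAt
    have hφ'diff : DifferentiableOn ℝ φ' (interior (Set.Ioi 0)) := by
      rw [interior_Ioi]
      exact fun x hx => ((hd2 x hx).differentiableAt).differentiableWithinAt
    have hderiv2 : ∀ x ∈ Set.Ioi (0:ℝ), deriv φ' x = φ'' x :=
      fun x hx => (hd2 x hx).deriv
    have hconc1 : ConcaveOn ℝ (Set.Ioi 0) φ' := by
      apply AntitoneOn.concaveOn_of_deriv (convex_Ioi 0) hφ'cont hφ'diff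
      rw [interior_Ioi]
      intro x hx y hy hxy
      rw [hderiv2 x hx, hderiv2 y hy]
      exact hanti hx hy hxy
    refine ⟨hconc1, ?_⟩
    -- key gradient inequality: φ' x - φ' t ≥ φ'' x * (x - t) for 0 < t ≤ x
    have hgrad : ∀ x ∈ Set.Ioi (0:ℝ), ∀ t, 0 < t → t ≤ x →
        φ'' x * (x - t) ≤ φ' x - φ' t := by
      intro x hx t ht htx
      have hmono : MonotoneOn (fun s => φ' s - φ'' x * s) (Set.Icc t x) := by
        apply monotoneOn_of_deriv_nonneg (convex_Icc t x)
        · apply ContinuousOn.sub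
          · exact hφ'cont.mono (fun s hs => lt_of_lt_of_le ht hs.1)
          · exact (continuous_const.mul continuous_id).continuousOn
        · rw [interior_Icc]
          intro s hs
          have hs0 : (0:ℝ) < s := lt_trans ht hs.1
          exact (((hd2 s hs0).sub ((hasDerivAt_id s).const_mul (φ'' x))).differentiableAt).differentiableWithinAt
        · rw [interior_Icc]
          intro s hs
          have hs0 : (0:ℝ) < s := lt_trans ht hs.1
          have hds : HasDerivAt (fun s => φ' s - φ'' x * s) (φ'' s - φ'' x * 1) s :=
            (hd2 s hs0).sub ((hasDerivAt_id s).const_mul (φ'' x))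
          rw [hds.deriv]
          have := hanti (Set.mem_Ioi.2 hs0) hx hs.2.le
          linarith
      have := hmono (Set.left_mem_Icc.2 htx) (Set.right_mem_Icc.2 htx) htx
      simp only at this
      linarith
    -- Taylor-type inequality: φ x - φ 0 ≤ x * φ' x - x^2 * φ'' x / 2
    have htaylor : ∀ x ∈ Set.Ioi (0:ℝ),
        φ x - φ 0 ≤ x * φ' x - x ^ 2 * φ'' x / 2 := by
      intro x hx
      have hx0 : (0:ℝ) < x := hx
      set h : ℝ → ℝ := fun t => φ t - (φ x + φ' x * (t - x) + φ'' x * (t - x) ^ 2 / 2)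
        with hhdef
      have hanti_h : AntitoneOn h (Set.Icc 0 x) := by
        apply antitoneOn_of_deriv_nonpos (convex_Icc 0 x)
        · apply ContinuousOn.sub
          · exact hcont.mono (fun s hs => hs.1)
          · fun_prop
        · rw [interior_Icc]
          intro s hs
          have hds : HasDerivAt h (φ' s - (φ' x + φ'' x * (s - x))) s := by
            have h1 : HasDerivAt (fun t => φ x + φ' x * (t - x) + φ'' x * (t - x) ^ 2 / 2)
                (φ' x + φ'' x * (s - x)) s := by
              have e1 : HasDerivAt (fun t : ℝ => t - x) 1 s := (hasDerivAt_id s).sub_const x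
              have e2 : HasDerivAt (fun t : ℝ => φ' x * (t - x)) (φ' x * 1) s := e1.const_mul _
              have e3 : HasDerivAt (fun t : ℝ => (t - x) ^ 2) (2 * (s - x) ^ 1 * 1) s := e1.pow 2
              have e4 : HasDerivAt (fun t : ℝ => φ'' x * (t - x) ^ 2 / 2)
                  (φ'' x * (2 * (s - x) ^ 1 * 1) / 2) s := (e3.const_mul (φ'' x)).div_const 2
              have := ((hasDerivAt_const s (φ x)).add e2).add e4
              exact this.congr_deriv (by ring)
            exact (hd1 s hs.1).sub h1
          exact (hds.differentiableAt).differentiableWithinAt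
        · rw [interior_Icc]
          intro s hs
          have hds : HasDerivAt h (φ' s - (φ' x + φ'' x * (s - x))) s := by
            have h1 : HasDerivAt (fun t => φ x + φ' x * (t - x) + φ'' x * (t - x) ^ 2 / 2)
                (φ' x + φ'' x * (s - x)) s := by
              have e1 : HasDerivAt (fun t : ℝ => t - x) 1 s := (hasDerivAt_id s).sub_const x
              have e2 : HasDerivAt (fun t : ℝ => φ' x * (t - x)) (φ' x * 1) s := e1.const_mul _
              have e3 : HasDerivAt (fun t : ℝ => (t - x) ^ 2) (2 * (s - x) ^ 1 * 1) s := e1.pow 2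
              have e4 : HasDerivAt (fun t : ℝ => φ'' x * (t - x) ^ 2 / 2)
                  (φ'' x * (2 * (s - x) ^ 1 * 1) / 2) s := (e3.const_mul (φ'' x)).div_const 2
              have := ((hasDerivAt_const s (φ x)).add e2).add e4
              exact this.congr_deriv (by ring)
            exact (hd1 s hs.1).sub h1
          rw [hds.deriv]
          have := hgrad x hx s hs.1 hs.2.le
          linarith
      have := hanti_h (Set.left_mem_Icc.2 hx0.le) (Set.right_mem_Icc.2 hx0.le) hx0.le
      simp only [hhdef] at this
      nlinarith [this]
    -- now the function ψ
    set ψ : ℝ → ℝ := fun x => (φ x - φ 0) / x with hψdef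
    set ψ' : ℝ → ℝ := fun x => (φ' x * x - (φ x - φ 0)) / x ^ 2 with hψ'def
    have hdψ : ∀ x ∈ Set.Ioi (0:ℝ), HasDerivAt ψ (ψ' x) x := by
      intro x hx
      have hx0 : (0:ℝ) < x := hx
      have h := ((hd1 x hx).sub_const (φ 0)).div (hasDerivAt_id x) (ne_of_gt hx0)
      simp only [id_eq, mul_one] at h
      exact h
    have hdψ' : ∀ x ∈ Set.Ioi (0:ℝ),
        HasDerivAt ψ' ((φ'' x * x * x ^ 2 -
          (φ' x * x - (φ x - φ 0)) * (2 * x)) / (x ^ 2) ^ 2) x := by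
      intro x hx
      have hx0 : (0:ℝ) < x := hx
      have hnum : HasDerivAt (fun y => φ' y * y - (φ y - φ 0))
          (φ'' x * x + φ' x * 1 - φ' x) x :=
        ((hd2 x hx).mul (hasDerivAt_id x)).sub ((hd1 x hx).sub_const (φ 0))
      have hden : HasDerivAt (fun y : ℝ => y ^ 2) (2 * x ^ 1 * 1) x :=
        (hasDerivAt_id x).pow 2
      have := hnum.div hden (by positivity)
      exact this.congr_deriv (by ring)
    have hψ'anti : AntitoneOn ψ' (Set.Ioi 0) := by
      apply antitoneOn_of_deriv_nonpos (convex_Ioi 0)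
      · exact fun x hx => ((hdψ' x hx).continuousAt).continuousWithinAt
      · rw [interior_Ioi]
        exact fun x hx => ((hdψ' x hx).differentiableAt).differentiableWithinAt
      · rw [interior_Ioi]
        intro x hx
        rw [(hdψ' x hx).deriv]
        have hx0 : (0:ℝ) < x := hx
        have ht := htaylor x hx
        have hnum_nonpos : φ'' x * x * x ^ 2 - (φ' x * x - (φ x - φ 0)) * (2 * x) ≤ 0 := by
          nlinarith
        exact div_nonpos_of_nonpos_of_nonneg hnum_nonpos (by positivity)
    have hψcont : ContinuousOn ψ (Set.Ioi 0) :=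
      fun x hx => ((hdψ x hx).continuousAt).continuousWithinAt
    have hψdiff : DifferentiableOn ℝ ψ (interior (Set.Ioi 0)) := by
      rw [interior_Ioi]
      exact fun x hx => ((hdψ x hx).differentiableAt).differentiableWithinAt
    apply AntitoneOn.concaveOn_of_deriv (convex_Ioi 0) hψcont hψdiff
    rw [interior_Ioi]
    intro x hx y hy hxy
    rw [(hdψ x hx).deriv, (hdψ y hy).deriv]
    exact hψ'anti hx hy hxy
end

section
/- Let a_1,…,a_n be nonnegative real constants and let X_1,…,X_n be independent Rademacher random variables, i.e., P(X_i = 1) = P(X_i = −1) = 1/2. Set Z = ∑_{i=1}^n a_i·X_i. Then for every integer q ≥ 2, ‖Z₊‖_q = ‖Z₋‖_q ≤ √(2Kq)·√(∑_{i=1}^n a_i²) and ‖Z‖_q ≤ 2^{1/q}·√(2Kq)·√(∑_{i=1}^n a_i²), where K = 1/(e − √e). -/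
open MeasureTheory ProbabilityTheory Real
open scoped ENNReal

/-- `lqNorm μ Y q = (E[|Y|^q])^(1/q)`. -/
noncomputable def lqNorm {Ω : Type*} [MeasurableSpace Ω] (μ : Measure Ω) (Y : Ω → ℝ) (q : ℝ) : ℝ :=
  (∫ ω, |Y ω| ^ q ∂μ) ^ (1 / q)



section helpers

variable {Ω : Type*} [MeasurableSpace Ω] (μ : Measure Ω) [IsProbabilityMeasure μ]
variable {X : Ω → ℝ}

open scoped Classical in
lemma rad_measure (hXm : Measurable X) (h1 : μ {ω | X ω = 1} = 1/2)
    (h2 : μ {ω | X ω = -1} = 1/2) {s : Set ℝ} (hs : MeasurableSet s) :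
    μ (X ⁻¹' s) = (if (1:ℝ) ∈ s then (1/2 : ℝ≥0∞) else 0)
      + (if (-1:ℝ) ∈ s then (1/2 : ℝ≥0∞) else 0) := by
  set A : Set Ω := X ⁻¹' {(1:ℝ)} with hA
  set B : Set Ω := X ⁻¹' {(-1:ℝ)} with hB
  have hAm : MeasurableSet A := hXm (measurableSet_singleton _)
  have hBm : MeasurableSet B := hXm (measurableSet_singleton _)
  have hμA : μ A = 1/2 := by
    have : A = {ω | X ω = 1} := by ext ω; simp [hA]
    rw [this, h1]
  have hμB : μ B = 1/2 := by
    have : B = {ω | X ω = -1} := by ext ω; simp [hB]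
    rw [this, h2]
  have hdis : Disjoint A B := by
    rw [Set.disjoint_left]
    intro ω hω1 hω2
    simp only [hA, hB, Set.mem_preimage, Set.mem_singleton_iff] at hω1 hω2
    norm_num [hω1] at hω2
  have hAB : μ (A ∪ B) = 1 := by
    rw [measure_union hdis hBm, hμA, hμB, ENNReal.add_halves]
  have hcompl : μ ((A ∪ B)ᶜ) = 0 := by
    rw [measure_compl (hAm.union hBm) (measure_ne_top μ _), hAB, measure_univ, tsub_self]
  have key : μ (X ⁻¹' s) = μ (X ⁻¹' s ∩ (A ∪ B)) := by
    have h' := measure_inter_add_diff (X ⁻¹' s) (hAm.union hBm) (μ := μ)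
    have hd : μ (X ⁻¹' s \ (A ∪ B)) = 0 :=
      measure_mono_null (fun x hx => hx.2) hcompl
    rw [hd, add_zero] at h'
    exact h'.symm
  have hsplit : X ⁻¹' s ∩ (A ∪ B) = (X ⁻¹' s ∩ A) ∪ (X ⁻¹' s ∩ B) :=
    Set.inter_union_distrib_left _ _ _
  have hIA : X ⁻¹' s ∩ A = if (1:ℝ) ∈ s then A else ∅ := by
    by_cases h : (1:ℝ) ∈ s
    · rw [if_pos h]; ext ω
      simp only [hA, Set.mem_inter_iff, Set.mem_preimage, Set.mem_singleton_iff]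
      exact ⟨fun h' => h'.2, fun h' => ⟨h' ▸ h, h'⟩⟩
    · rw [if_neg h]; ext ω
      simp only [hA, Set.mem_inter_iff, Set.mem_preimage,
        Set.mem_singleton_iff, Set.mem_empty_iff_false, iff_false]
      exact fun hh => h (hh.2 ▸ hh.1)
  have hIB : X ⁻¹' s ∩ B = if (-1:ℝ) ∈ s then B else ∅ := by
    by_cases h : (-1:ℝ) ∈ s
    · rw [if_pos h]; ext ω
      simp only [hB, Set.mem_inter_iff, Set.mem_preimage, Set.mem_singleton_iff]
      exact ⟨fun h' => h'.2, fun h' => ⟨h' ▸ h, h'⟩⟩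
    · rw [if_neg h]; ext ω
      simp only [hB, Set.mem_inter_iff, Set.mem_preimage,
        Set.mem_singleton_iff, Set.mem_empty_iff_false, iff_false]
      exact fun hh => h (hh.2 ▸ hh.1)
  have hdis' : Disjoint (X ⁻¹' s ∩ A) (X ⁻¹' s ∩ B) :=
    hdis.mono Set.inter_subset_right Set.inter_subset_right
  rw [key, hsplit, measure_union hdis' (by
    rw [hIB]; split <;> [exact hBm; exact MeasurableSet.empty]), hIA, hIB]
  congr 1 <;> split <;> simp [hμA, hμB]

lemma rad_ae (hXm : Measurable X) (h1 : μ {ω | X ω = 1} = 1/2)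
    (h2 : μ {ω | X ω = -1} = 1/2) :
    ∀ᵐ ω ∂μ, X ω = 1 ∨ X ω = -1 := by
  have h := rad_measure μ hXm h1 h2 (s := ({1, -1} : Set ℝ))
    (by measurability)
  have : μ {ω | ¬ (X ω = 1 ∨ X ω = -1)} = 0 := by
    have hc : {ω | ¬ (X ω = 1 ∨ X ω = -1)} = (X ⁻¹' ({1, -1} : Set ℝ))ᶜ := by
      ext ω; simp [not_or]
    rw [hc, measure_compl (hXm (by measurability)) (measure_ne_top μ _), measure_univ, h,
      if_pos (by norm_num), if_pos (by norm_num), ENNReal.add_halves, tsub_self]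
  exact this

lemma rad_exp (hXm : Measurable X) (h1 : μ {ω | X ω = 1} = 1/2)
    (h2 : μ {ω | X ω = -1} = 1/2) (s : ℝ) :
    ∫ ω, Real.exp (s * X ω) ∂μ = Real.cosh s := by
  set A : Set Ω := X ⁻¹' {(1:ℝ)} with hA
  set B : Set Ω := X ⁻¹' {(-1:ℝ)} with hB
  have hAm : MeasurableSet A := hXm (measurableSet_singleton _)
  have hBm : MeasurableSet B := hXm (measurableSet_singleton _)
  have hμA : μ A = 1/2 := by
    have : A = {ω | X ω = 1} := by ext ω; simp [hA]
    rw [this, h1]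
  have hμB : μ B = 1/2 := by
    have : B = {ω | X ω = -1} := by ext ω; simp [hB]
    rw [this, h2]
  have heq : (fun ω => Real.exp (s * X ω)) =ᵐ[μ]
      (fun ω => A.indicator (fun _ => Real.exp s) ω
        + B.indicator (fun _ => Real.exp (-s)) ω) := by
    filter_upwards [rad_ae μ hXm h1 h2] with ω hω
    rcases hω with h | h
    · have hωA : ω ∈ A := by simp only [hA, Set.mem_preimage, Set.mem_singleton_iff]; exact h
      have hωB : ω ∉ B := by simp only [hB, Set.mem_preimage, Set.mem_singleton_iff, h]; norm_num
      simp [Set.indicator_of_mem hωA, Set.indicator_of_notMem hωB, h]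
    · have hωA : ω ∉ A := by simp only [hA, Set.mem_preimage, Set.mem_singleton_iff, h]; norm_num
      have hωB : ω ∈ B := by simp only [hB, Set.mem_preimage, Set.mem_singleton_iff]; exact h
      simp [Set.indicator_of_mem hωB, Set.indicator_of_notMem hωA, h, mul_comm]
  rw [integral_congr_ae heq, integral_add
      ((integrable_const _).indicator hAm) ((integrable_const _).indicator hBm),
    integral_indicator_const _ hAm, integral_indicator_const _ hBm, measureReal_def, measureReal_def, hμA, hμB, Real.cosh_eq]
  simp [ENNReal.toReal_div, smul_eq_mul]
  ring

end helpers

section sym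

variable {Ω : Type*} [MeasurableSpace Ω] (μ : Measure Ω) [IsProbabilityMeasure μ]

lemma rad_sym {n : ℕ} {X : Fin n → Ω → ℝ} (hX : ∀ i, Measurable (X i))
    (hindep : iIndepFun X μ)
    (hrad : ∀ i, μ {ω | X i ω = 1} = 1 / 2 ∧ μ {ω | X i ω = -1} = 1 / 2)
    (g : (Fin n → ℝ) → ℝ) (hg : Measurable g) :
    ∫ ω, g (fun i => X i ω) ∂μ = ∫ ω, g (fun i => -X i ω) ∂μ := by
  classical
  set m : Fin n → Measure ℝ := fun i => Measure.map (X i) μ with hm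
  haveI : ∀ i, IsProbabilityMeasure (m i) :=
    fun i => Measure.isProbabilityMeasure_map (hX i).aemeasurable
  have key : ∀ i (s : Set ℝ), MeasurableSet s →
      μ ((fun ω => -X i ω) ⁻¹' s) = m i s := by
    intro i s hs
    have h1 := rad_measure μ (hX i) (hrad i).1 (hrad i).2 hs
    have h2 := rad_measure μ (hX i) (hrad i).1 (hrad i).2
      (hs.preimage (measurable_neg : Measurable (fun x : ℝ => -x)))
    have hneg : (fun ω => -X i ω) ⁻¹' s = X i ⁻¹' ((fun x : ℝ => -x) ⁻¹' s) := rfl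
    rw [hneg, h2, hm]
    simp only [Set.mem_preimage, neg_neg]
    rw [Measure.map_apply (hX i) hs, h1]
    by_cases ha : (1:ℝ) ∈ s <;> by_cases hb : (-1:ℝ) ∈ s <;> simp [ha, hb, add_comm]
  have keyX : ∀ i (s : Set ℝ), MeasurableSet s → μ (X i ⁻¹' s) = m i s := by
    intro i s hs
    rw [hm, Measure.map_apply (hX i) hs]
  have hindep' : iIndepFun (fun i ω => -X i ω) μ :=
    hindep.comp (fun _ x => -x) (fun _ => measurable_neg)
  have hprod : ∀ (f : Fin n → Ω → ℝ), (∀ i, Measurable (f i)) →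
      iIndepFun f μ →
      (∀ i s, MeasurableSet s → μ (f i ⁻¹' s) = m i s) →
      Measure.map (fun ω i => f i ω) μ = Measure.pi m := by
    intro f hfm hfind hfs
    refine (Measure.pi_eq fun s hs => ?_).symm
    rw [Measure.map_apply (measurable_pi_lambda _ hfm) (MeasurableSet.univ_pi hs)]
    have hpre : (fun ω i => f i ω) ⁻¹' Set.pi Set.univ s
        = ⋂ i ∈ Finset.univ, f i ⁻¹' s i := by
      ext ω; simp [Set.mem_pi]
    rw [hpre, hfind.measure_inter_preimage_eq_mul Finset.univ (fun i _ => hs i)]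
    exact Finset.prod_congr rfl fun i _ => hfs i (s i) (hs i)
  have hmap1 : Measure.map (fun ω i => X i ω) μ = Measure.pi m :=
    hprod X hX hindep keyX
  have hmap2 : Measure.map (fun ω i => -X i ω) μ = Measure.pi m :=
    hprod (fun i ω => -X i ω) (fun i => (hX i).neg) hindep' key
  have e1 : ∫ ω, g (fun i => X i ω) ∂μ = ∫ x, g x ∂(Measure.map (fun ω i => X i ω) μ) :=
    (integral_map (measurable_pi_lambda _ hX).aemeasurable hg.aestronglyMeasurable).symm
  have e2 : ∫ ω, g (fun i => -X i ω) ∂μ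
      = ∫ x, g x ∂(Measure.map (fun ω i => -X i ω) μ) :=
    (integral_map (measurable_pi_lambda _ fun i => (hX i).neg).aemeasurable
      hg.aestronglyMeasurable).symm
  rw [e1, e2, hmap1, hmap2]

end sym
set_option maxHeartbeats 1000000 in
/-- **Theorem 7** (Khinchine's inequality). For nonnegative constants `aᵢ` and independent
Rademacher variables `Xᵢ`, if `Z = ∑ aᵢ Xᵢ`, then for all integers `q ≥ 2`,
`‖Z₊‖_q = ‖Z₋‖_q ≤ √(2Kq) √(∑ aᵢ²)` and `‖Z‖_q ≤ 2^{1/q} √(2Kq) √(∑ aᵢ²)`. -/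
theorem theorem7_khinchine
    {Ω : Type*} [MeasurableSpace Ω]
    (μ : Measure Ω) [IsProbabilityMeasure μ] (n : ℕ)
    (a : Fin n → ℝ) (ha : ∀ i, 0 ≤ a i)
    (X : Fin n → Ω → ℝ)
    (hX : ∀ i, Measurable (X i))
    (hindep : iIndepFun X μ)
    -- each `Xᵢ` is a Rademacher variable
    (hrad : ∀ i, μ {ω | X i ω = 1} = 1 / 2 ∧ μ {ω | X i ω = -1} = 1 / 2)
    (Z : Ω → ℝ) (hZ : Z = fun ω => ∑ i, a i * X i ω)
    (K : ℝ) (hK : K = 1 / (Real.exp 1 - Real.sqrt (Real.exp 1))) :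
    ∀ q : ℕ, 2 ≤ q →
      lqNorm μ (fun ω => max (Z ω) 0) q = lqNorm μ (fun ω => max (-Z ω) 0) q ∧
      lqNorm μ (fun ω => max (Z ω) 0) q ≤
        Real.sqrt (2 * K * q) * Real.sqrt (∑ i, a i ^ 2) ∧
      lqNorm μ Z q ≤
        (2 : ℝ) ^ (1 / (q : ℝ)) * Real.sqrt (2 * K * q) * Real.sqrt (∑ i, a i ^ 2) := by
  intro q hq
  have hqn0 : q ≠ 0 := by omega
  have hqR : (2:ℝ) ≤ (q:ℝ) := by exact_mod_cast hq
  have hqpos : (0:ℝ) < q := by linarith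
  have hqne : (q:ℝ) ≠ 0 := ne_of_gt hqpos
  have hE : (1:ℝ) < Real.exp 1 := by have := Real.add_one_le_exp 1; linarith
  have hdiffpos : 0 < Real.exp 1 - Real.sqrt (Real.exp 1) := by
    have : Real.sqrt (Real.exp 1) < Real.exp 1 :=
      (Real.sqrt_lt' (Real.exp_pos 1)).2 (by nlinarith)
    linarith
  have hKpos : 0 < K := by rw [hK]; positivity
  have h2K : Real.exp (-1) ≤ 2 * K := by
    rw [hK, Real.exp_neg, ← one_div, mul_one_div,
      div_le_div_iff₀ (Real.exp_pos 1) hdiffpos]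
    nlinarith [Real.sqrt_nonneg (Real.exp 1), Real.exp_pos 1]
  set v : ℝ := ∑ i, a i ^ 2 with hv
  have hv0 : 0 ≤ v := Finset.sum_nonneg fun i _ => sq_nonneg _
  have hZm : Measurable Z := by
    rw [hZ]; exact Finset.measurable_sum _ fun i _ => (hX i).const_mul (a i)
  simp only [lqNorm, Real.rpow_natCast]
  have habs1 : (fun ω => |max (Z ω) 0| ^ q) = fun ω => (max (Z ω) 0) ^ q :=
    funext fun ω => by rw [abs_of_nonneg (le_max_right _ _)]
  have habs2 : (fun ω => |max (-Z ω) 0| ^ q) = fun ω => (max (-Z ω) 0) ^ q :=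
    funext fun ω => by rw [abs_of_nonneg (le_max_right _ _)]
  rcases eq_or_lt_of_le hv0 with hveq | hvpos
  · -- degenerate case v = 0
    have hz : ∀ i, a i = 0 := by
      intro i
      have h := (Finset.sum_eq_zero_iff_of_nonneg
        (fun j (_ : j ∈ Finset.univ) => sq_nonneg (a j))).1 hveq.symm i (Finset.mem_univ i)
      exact pow_eq_zero_iff (two_ne_zero) |>.1 h
    have hZ0 : Z = fun _ => (0:ℝ) := by
      rw [hZ]; funext ω; exact Finset.sum_eq_zero fun i _ => by rw [hz i, zero_mul]
    have hsq : Real.sqrt v = 0 := by rw [← hveq, Real.sqrt_zero]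
    rw [hZ0]
    simp only [neg_zero, max_self, abs_zero, zero_pow hqn0, integral_zero,
      Real.zero_rpow (one_div_ne_zero hqne), hsq]
    exact ⟨trivial, le_of_eq (by ring), le_of_eq (by ring)⟩
  · -- main case v > 0
    -- the moment generating function bound
    set Y : Fin n → Ω → ℝ := fun i ω => a i * X i ω with hy
    have hYm : ∀ i, Measurable (Y i) := fun i => (hX i).const_mul (a i)
    have hYindep : iIndepFun Y μ :=
      hindep.comp (fun i x => a i * x) (fun i => measurable_const_mul (a i))
    have hZsum : Z = ∑ i, Y i := by
      rw [hZ]; funext ω; rw [Finset.sum_apply]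
    have hmgf : ∀ t : ℝ, mgf Z μ t ≤ Real.exp (t ^ 2 * v / 2) := by
      intro t
      rw [hZsum, iIndepFun.mgf_sum hYindep hYm Finset.univ]
      have hstep : ∀ i, mgf (Y i) μ t ≤ Real.exp ((t * a i) ^ 2 / 2) := by
        intro i
        have hm : mgf (Y i) μ t = ∫ ω, Real.exp ((t * a i) * X i ω) ∂μ := by
          simp only [mgf, hy]; congr 1; funext ω; ring_nf
        rw [hm, rad_exp μ (hX i) (hrad i).1 (hrad i).2 (t * a i)]
        exact Real.cosh_le_exp_half_sq _
      calc ∏ i, mgf (Y i) μ t ≤ ∏ i, Real.exp ((t * a i) ^ 2 / 2) :=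
            Finset.prod_le_prod (fun i _ => mgf_nonneg) (fun i _ => hstep i)
        _ = Real.exp (∑ i, (t * a i) ^ 2 / 2) := (Real.exp_sum _ _).symm
        _ = Real.exp (t ^ 2 * v / 2) := by
            congr 1
            rw [hv, Finset.mul_sum, Finset.sum_div]
            exact Finset.sum_congr rfl fun i _ => by ring
    -- a.e. boundedness
    have hae : ∀ᵐ ω ∂μ, ∀ i, X i ω = 1 ∨ X i ω = -1 :=
      (MeasureTheory.ae_all_iff).2 fun i => rad_ae μ (hX i) (hrad i).1 (hrad i).2
    set M : ℝ := ∑ i, a i with hM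
    have hZbd : ∀ᵐ ω ∂μ, |Z ω| ≤ M := by
      filter_upwards [hae] with ω hω
      rw [hZ, hM]
      calc |∑ i, a i * X i ω| ≤ ∑ i, |a i * X i ω| := Finset.abs_sum_le_sum_abs _ _
        _ ≤ ∑ i, a i := Finset.sum_le_sum fun i _ => by
            rcases hω i with h | h <;>
              simp [abs_mul, h, abs_of_nonneg (ha i)]
    -- integrability facts
    have intq : Integrable (fun ω => |Z ω| ^ q) μ := by
      refine Integrable.mono' (integrable_const (M ^ q))
        (hZm.abs.pow_const q).aestronglyMeasurable ?_
      filter_upwards [hZbd] with ω h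
      rw [Real.norm_eq_abs, abs_of_nonneg (by positivity)]
      exact pow_le_pow_left₀ (abs_nonneg _) h q
    have intp : Integrable (fun ω => (max (Z ω) 0) ^ q) μ := by
      refine Integrable.mono' (integrable_const (M ^ q))
        ((hZm.max measurable_const).pow_const q).aestronglyMeasurable ?_
      filter_upwards [hZbd] with ω h
      rw [Real.norm_eq_abs, abs_of_nonneg (by positivity)]
      exact pow_le_pow_left₀ (le_max_right _ _)
        (le_trans (max_le (le_abs_self _) (abs_nonneg _)) h) q
    have intm : Integrable (fun ω => (max (-Z ω) 0) ^ q) μ := by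
      refine Integrable.mono' (integrable_const (M ^ q))
        ((hZm.neg.max measurable_const).pow_const q).aestronglyMeasurable ?_
      filter_upwards [hZbd] with ω h
      rw [Real.norm_eq_abs, abs_of_nonneg (by positivity)]
      refine pow_le_pow_left₀ (le_max_right _ _) (le_trans (max_le ?_ (abs_nonneg _)) h) q
      rw [← abs_neg (Z ω)] at *
      exact le_abs_self _
    have intexp : ∀ t : ℝ, Integrable (fun ω => Real.exp (t * Z ω)) μ := by
      intro t
      refine Integrable.mono' (integrable_const (Real.exp (|t| * M)))
        ((hZm.const_mul t).exp.aestronglyMeasurable) ?_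
      filter_upwards [hZbd] with ω h
      rw [Real.norm_eq_abs, Real.abs_exp]
      refine Real.exp_le_exp.2 (le_trans (le_abs_self _) ?_)
      rw [abs_mul]
      exact mul_le_mul_of_nonneg_left h (abs_nonneg t)
    -- the optimized exponential bound
    set θ : ℝ := Real.sqrt ((q : ℝ) / v) with hθ
    have hθpos : 0 < θ := Real.sqrt_pos.2 (div_pos hqpos hvpos)
    have hθsq : θ ^ 2 = (q : ℝ) / v := Real.sq_sqrt (div_pos hqpos hvpos).le
    have hqv0 : 0 ≤ (q : ℝ) * v := by positivity
    have hmulθ : Real.sqrt ((q : ℝ) * v) * θ = (q : ℝ) := by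
      rw [hθ, ← Real.sqrt_mul hqv0]
      have : (q : ℝ) * v * ((q : ℝ) / v) = (q : ℝ) ^ 2 := by
        field_simp
      rw [this, Real.sqrt_sq hqpos.le]
    have hqθ : Real.sqrt ((q : ℝ) * v) = (q : ℝ) / θ :=
      (eq_div_iff hθpos.ne').2 hmulθ
    set c : ℝ := Real.sqrt ((q : ℝ) * v) ^ q * Real.exp (-(q : ℝ)) with hc
    have hc0 : 0 ≤ c := by positivity
    have pointwise : ∀ ω, |Z ω| ^ q
        ≤ c * (Real.exp (θ * Z ω) + Real.exp ((-θ) * Z ω)) := by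
      intro ω
      set z : ℝ := Z ω with hz
      have h1 : θ * |z| / q ≤ Real.exp (θ * |z| / q - 1) := by
        have := Real.add_one_le_exp (θ * |z| / q - 1); linarith
      have h2 : (θ * |z| / q) ^ q ≤ Real.exp (θ * |z| - q) := by
        calc (θ * |z| / q) ^ q ≤ Real.exp (θ * |z| / q - 1) ^ q :=
              pow_le_pow_left₀ (by positivity) h1 q
          _ = Real.exp ((q : ℝ) * (θ * |z| / q - 1)) := (Real.exp_nat_mul _ q).symm
          _ = Real.exp (θ * |z| - q) := by congr 1; field_simp
      have h3 : |z| ^ q = Real.sqrt ((q : ℝ) * v) ^ q * (θ * |z| / q) ^ q := by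
        rw [← mul_pow]; congr 1
        rw [hqθ]; field_simp
      have h4 : Real.exp (θ * |z|) ≤ Real.exp (θ * z) + Real.exp ((-θ) * z) := by
        rcases abs_cases z with ⟨habs, _⟩ | ⟨habs, _⟩
        · rw [habs]; exact le_add_of_nonneg_right (Real.exp_pos _).le
        · rw [habs]
          have : θ * -z = (-θ) * z := by ring
          rw [this]
          exact le_add_of_nonneg_left (Real.exp_pos _).le
      calc |z| ^ q = Real.sqrt ((q : ℝ) * v) ^ q * (θ * |z| / q) ^ q := h3
        _ ≤ Real.sqrt ((q : ℝ) * v) ^ q * Real.exp (θ * |z| - q) :=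
            mul_le_mul_of_nonneg_left h2 (by positivity)
        _ = c * Real.exp (θ * |z|) := by
            rw [hc, mul_assoc, ← Real.exp_add]; congr 2; ring
        _ ≤ c * (Real.exp (θ * z) + Real.exp ((-θ) * z)) :=
            mul_le_mul_of_nonneg_left h4 hc0
    set D : ℝ := Real.sqrt ((q : ℝ) * v) * Real.exp (-(1:ℝ)/2) with hD
    have hD0 : 0 ≤ D := by positivity
    have Hmain : ∫ ω, |Z ω| ^ q ∂μ ≤ 2 * D ^ q := by
      have step1 : ∫ ω, |Z ω| ^ q ∂μ
          ≤ ∫ ω, c * (Real.exp (θ * Z ω) + Real.exp ((-θ) * Z ω)) ∂μ :=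
        integral_mono intq (((intexp θ).add (intexp (-θ))).const_mul c)
          fun ω => pointwise ω
      have step2 : ∫ ω, c * (Real.exp (θ * Z ω) + Real.exp ((-θ) * Z ω)) ∂μ
          = c * (mgf Z μ θ + mgf Z μ (-θ)) := by
        rw [integral_const_mul, integral_add (intexp θ) (intexp (-θ))]
        rfl
      have step3 : c * (mgf Z μ θ + mgf Z μ (-θ))
          ≤ c * (Real.exp ((q:ℝ)/2) + Real.exp ((q:ℝ)/2)) := by
        have hq2 : θ ^ 2 * v / 2 = (q : ℝ) / 2 := by
          rw [hθsq, div_mul_cancel₀ _ hvpos.ne']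
        have hm1 : mgf Z μ θ ≤ Real.exp ((q:ℝ)/2) := by
          have := hmgf θ; rwa [hq2] at this
        have hm2 : mgf Z μ (-θ) ≤ Real.exp ((q:ℝ)/2) := by
          have := hmgf (-θ); rwa [neg_sq, hq2] at this
        exact mul_le_mul_of_nonneg_left (add_le_add hm1 hm2) hc0
      have step4 : c * (Real.exp ((q:ℝ)/2) + Real.exp ((q:ℝ)/2)) = 2 * D ^ q := by
        have e1 : Real.exp (-(q:ℝ)) * Real.exp ((q:ℝ)/2) = Real.exp (-(1:ℝ)/2) ^ q := by
          rw [← Real.exp_add, ← Real.exp_nat_mul]; congr 1; ring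
        rw [hD, mul_pow, ← e1, hc]; ring
      calc ∫ ω, |Z ω| ^ q ∂μ ≤ _ := step1
        _ = _ := step2
        _ ≤ _ := step3
        _ = 2 * D ^ q := step4
    -- symmetry
    have hsym : ∫ ω, (max (Z ω) 0) ^ q ∂μ = ∫ ω, (max (-Z ω) 0) ^ q ∂μ := by
      set g : (Fin n → ℝ) → ℝ := fun x => (max (∑ i, a i * x i) 0) ^ q with hg'
      have hg : Measurable g :=
        (((continuous_finset_sum _ fun i _ => continuous_const.mul (continuous_apply i)).max
          continuous_const).pow q).measurable
      have h1 : (fun ω => (max (Z ω) 0) ^ q) = fun ω => g (fun i => X i ω) := by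
        funext ω; rw [hZ, hg']
      have h2 : (fun ω => (max (-Z ω) 0) ^ q) = fun ω => g (fun i => -X i ω) := by
        funext ω; rw [hZ, hg']
        congr 2
        rw [← Finset.sum_neg_distrib]
        exact Finset.sum_congr rfl fun i _ => by ring
      rw [h1, h2, rad_sym μ hX hindep hrad g hg]
    have hsplitp : ∫ ω, |Z ω| ^ q ∂μ
        = ∫ ω, (max (Z ω) 0) ^ q ∂μ + ∫ ω, (max (-Z ω) 0) ^ q ∂μ := by
      have hp : ∀ z : ℝ, |z| ^ q = (max z 0) ^ q + (max (-z) 0) ^ q := by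
        intro z
        rcases le_total 0 z with h | h
        · rw [abs_of_nonneg h, max_eq_left h, max_eq_right (neg_nonpos.2 h),
            zero_pow hqn0, add_zero]
        · rw [abs_of_nonpos h, max_eq_right h, max_eq_left (neg_nonneg.2 h),
            zero_pow hqn0, zero_add]
      rw [show (fun ω => |Z ω| ^ q) = fun ω => (max (Z ω) 0) ^ q + (max (-Z ω) 0) ^ q
            from funext fun ω => hp (Z ω)]
      exact integral_add intp intm
    have hfinal : ∫ ω, (max (Z ω) 0) ^ q ∂μ ≤ D ^ q := by
      rw [hsplitp, ← hsym] at Hmain; linarith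
    -- comparison of D with the target bound
    have hB : D ≤ Real.sqrt (2 * K * q) * Real.sqrt v := by
      rw [← Real.sqrt_mul (by positivity) v]
      rw [Real.le_sqrt hD0 (by positivity)]
      have hDsq : D ^ 2 = (q : ℝ) * v * Real.exp (-1) := by
        rw [hD, mul_pow, Real.sq_sqrt hqv0]
        congr 1
        rw [← Real.exp_nat_mul]
        congr 1; push_cast; ring
      rw [hDsq]
      have hqvpos : 0 < (q : ℝ) * v := by positivity
      nlinarith [h2K, Real.exp_pos (-1 : ℝ)]
    -- conclude
    refine ⟨?_, ?_, ?_⟩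
    · rw [habs1, habs2, hsym]
    · rw [habs1]
      calc (∫ ω, (max (Z ω) 0) ^ q ∂μ) ^ (1/(q:ℝ))
          ≤ (D ^ q) ^ (1/(q:ℝ)) :=
            Real.rpow_le_rpow (integral_nonneg fun ω => pow_nonneg (le_max_right _ _) q)
              hfinal (one_div_nonneg.2 hqpos.le)
        _ = D := by
            rw [← Real.rpow_natCast D q, ← Real.rpow_mul hD0,
              mul_one_div, div_self hqne, Real.rpow_one]
        _ ≤ Real.sqrt (2 * K * q) * Real.sqrt v := hB
    · calc (∫ ω, |Z ω| ^ q ∂μ) ^ (1/(q:ℝ))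
          ≤ (2 * D ^ q) ^ (1/(q:ℝ)) :=
            Real.rpow_le_rpow (integral_nonneg fun ω => pow_nonneg (abs_nonneg _) q)
              Hmain (one_div_nonneg.2 hqpos.le)
        _ = (2:ℝ) ^ (1/(q:ℝ)) * (D ^ q) ^ (1/(q:ℝ)) :=
            Real.mul_rpow (by norm_num) (pow_nonneg hD0 q)
        _ = (2:ℝ) ^ (1/(q:ℝ)) * D := by
            rw [← Real.rpow_natCast D q, ← Real.rpow_mul hD0,
              mul_one_div, div_self hqne, Real.rpow_one]
        _ ≤ (2:ℝ) ^ (1/(q:ℝ)) * (Real.sqrt (2 * K * q) * Real.sqrt v) :=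
            mul_le_mul_of_nonneg_left hB (Real.rpow_nonneg (by norm_num) _)
        _ = (2:ℝ) ^ (1/(q:ℝ)) * Real.sqrt (2 * K * q) * Real.sqrt v :=
            (mul_assoc _ _ _).symm
end

section
/- Let X_1,…,X_n be independent centered real random variables (E[X_i] = 0 for all i). Set Z = ∑_{i=1}^n X_i, σ² = ∑_{i=1}^n E[X_i²], and Y = max_{1≤i≤n} |X_i|. Then for every integer q ≥ 2 and every θ ∈ (0,1), ‖Z₊‖_q ≤ σ·√(2·κ·(2 + θ)·q) + q·κ·√(1 + 1/θ)·‖Y‖_q. -/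
set_option maxHeartbeats 1000000

open MeasureTheory ProbabilityTheory Real

namespace Rosenthal9

/-- `y * (x^m - y^m) ≤ m * ((x-y) * x^m)` for `0 ≤ y ≤ x`. -/
lemma mul_pow_sub_le (m : ℕ) {x y : ℝ} (h0 : 0 ≤ y) (hxy : y ≤ x) :
    y * (x ^ m - y ^ m) ≤ m * ((x - y) * x ^ m) := by
  induction m with
  | zero => simp
  | succ m ih =>
    have hx0 : 0 ≤ x := h0.trans hxy
    have hyx : y ^ (m+1) ≤ x ^ (m+1) := pow_le_pow_left₀ h0 hxy _
    have key : y * (x ^ (m+1) - y ^ (m+1))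
        = x * (y * (x ^ m - y ^ m)) + (x - y) * y ^ (m+1) := by ring
    rw [key]
    have h1 : x * (y * (x ^ m - y ^ m)) ≤ x * (m * ((x - y) * x ^ m)) :=
      mul_le_mul_of_nonneg_left ih hx0
    have h2 : (x - y) * y ^ (m+1) ≤ (x - y) * x ^ (m+1) :=
      mul_le_mul_of_nonneg_left hyx (by linarith)
    have h3 : x * ((m:ℝ) * ((x - y) * x ^ m)) = (m:ℝ) * ((x - y) * x ^ (m+1)) := by ring
    push_cast
    linarith [h1, h2]

/-- Lipschitz-type bound for `φ(z) = z·|z|^m`. -/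
lemma phi_lipschitz (m : ℕ) (a b : ℝ) :
    |a * |a| ^ m - b * |b| ^ m| ≤ (m + 1) * |a - b| * max |a| |b| ^ m := by
  rcases le_total |b| |a| with hba | hab
  · have hmax : max |a| |b| = |a| := max_eq_left hba
    rw [hmax]
    have key : a * |a| ^ m - b * |b| ^ m = (a - b) * |a| ^ m + b * (|a| ^ m - |b| ^ m) := by ring
    have h1 : |(a - b) * |a| ^ m| ≤ |a - b| * |a| ^ m := by
      rw [abs_mul, abs_pow, abs_abs]
    have h2 : |b * (|a| ^ m - |b| ^ m)| ≤ m * (|a - b| * |a| ^ m) := by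
      rw [abs_mul]
      have hd : |(|a| ^ m - |b| ^ m)| = |a| ^ m - |b| ^ m := by
        rw [abs_of_nonneg]
        have := pow_le_pow_left₀ (abs_nonneg b) hba m
        linarith
      rw [hd]
      have hmps := mul_pow_sub_le m (abs_nonneg b) hba
      have habs : |a| - |b| ≤ |a - b| := abs_sub_abs_le_abs_sub a b
      have hx0 : (0:ℝ) ≤ |a| ^ m := by positivity
      have h4 : (|a| - |b|) * |a|^m ≤ |a - b| * |a|^m := mul_le_mul_of_nonneg_right habs hx0
      have h5 := mul_le_mul_of_nonneg_left h4 (Nat.cast_nonneg (α := ℝ) m)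
      linarith
    calc |a * |a| ^ m - b * |b| ^ m|
        = |(a - b) * |a| ^ m + b * (|a| ^ m - |b| ^ m)| := by rw [key]
      _ ≤ |(a - b) * |a| ^ m| + |b * (|a| ^ m - |b| ^ m)| := abs_add_le _ _
      _ ≤ |a - b| * |a| ^ m + m * (|a - b| * |a| ^ m) := add_le_add h1 h2
      _ = (m + 1) * |a - b| * |a| ^ m := by ring
  · have hmax : max |a| |b| = |b| := max_eq_right hab
    rw [hmax]
    have key : a * |a| ^ m - b * |b| ^ m = -((b - a) * |b| ^ m + a * (|b| ^ m - |a| ^ m)) := by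
      ring
    have h1 : |(b - a) * |b| ^ m| ≤ |a - b| * |b| ^ m := by
      rw [abs_mul, abs_pow, abs_abs, abs_sub_comm]
    have h2 : |a * (|b| ^ m - |a| ^ m)| ≤ m * (|a - b| * |b| ^ m) := by
      rw [abs_mul]
      have hd : |(|b| ^ m - |a| ^ m)| = |b| ^ m - |a| ^ m := by
        rw [abs_of_nonneg]
        have := pow_le_pow_left₀ (abs_nonneg a) hab m
        linarith
      rw [hd]
      have hmps := mul_pow_sub_le m (abs_nonneg a) hab
      have habs : |b| - |a| ≤ |a - b| := by
        have := abs_sub_abs_le_abs_sub b a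
        rwa [abs_sub_comm] at this
      have hx0 : (0:ℝ) ≤ |b| ^ m := by positivity
      have h4 : (|b| - |a|) * |b|^m ≤ |a - b| * |b|^m := mul_le_mul_of_nonneg_right habs hx0
      have h5 := mul_le_mul_of_nonneg_left h4 (Nat.cast_nonneg (α := ℝ) m)
      linarith
    calc |a * |a| ^ m - b * |b| ^ m|
        = |(b - a) * |b| ^ m + a * (|b| ^ m - |a| ^ m)| := by rw [key, abs_neg]
      _ ≤ |(b - a) * |b| ^ m| + |a * (|b| ^ m - |a| ^ m)| := abs_add_le _ _
      _ ≤ |a - b| * |b| ^ m + m * (|a - b| * |b| ^ m) := add_le_add h1 h2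
      _ = (m + 1) * |a - b| * |b| ^ m := by ring

/-- `(1+y)^m ≤ 1 + my + (my)^2` when `0 ≤ y` and `my ≤ 1`. -/
lemma one_add_pow_le (m : ℕ) {y : ℝ} (h0 : 0 ≤ y) (h1 : (m:ℝ) * y ≤ 1) :
    (1 + y) ^ m ≤ 1 + (m:ℝ) * y + ((m:ℝ) * y) ^ 2 := by
  induction m with
  | zero => simp
  | succ m ih =>
    have hm0 : (0:ℝ) ≤ (m:ℝ) := Nat.cast_nonneg m
    have hmy : (m : ℝ) * y ≤ 1 := by push_cast at h1; nlinarith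
    have ihm := ih hmy
    have h2 : (1 + y) ^ (m+1) = (1 + y) ^ m * (1 + y) := by ring
    rw [h2]
    have hy1 : (0:ℝ) ≤ 1 + y := by linarith
    have hstep : (1 + y) ^ m * (1 + y) ≤ (1 + (m:ℝ) * y + ((m:ℝ)*y) ^ 2) * (1 + y) :=
      mul_le_mul_of_nonneg_right ihm hy1
    push_cast
    push_cast at h1
    nlinarith [sq_nonneg y, mul_nonneg hm0 h0, mul_nonneg (mul_nonneg hm0 hm0) h0]

/-- Lower bound on the constant κ. -/
lemma kappa_lb : (1.27 : ℝ) ≤ Real.sqrt (Real.exp 1) / (2 * (Real.sqrt (Real.exp 1) - 1)) := by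
  have h1 : (1:ℝ) < Real.exp 1 := by
    have := Real.exp_one_gt_d9; linarith
  have hs1 : 1 < Real.sqrt (Real.exp 1) := by
    have : Real.sqrt 1 < Real.sqrt (Real.exp 1) := Real.sqrt_lt_sqrt (by norm_num) h1
    simpa using this
  have hsub : Real.sqrt (Real.exp 1) ≤ 1.64878 := by
    rw [Real.sqrt_le_iff]
    constructor
    · norm_num
    · nlinarith [Real.exp_one_lt_d9]
  have hden : 0 < 2 * (Real.sqrt (Real.exp 1) - 1) := by linarith
  rw [le_div_iff₀ hden]
  nlinarith

/-- The key numeric inequality for the induction step. -/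
lemma key_num {κ θ : ℝ} (hκ : (1.27:ℝ) ≤ κ) (hθ0 : 0 < θ) (hθ1 : θ < 1)
    {q k : ℕ} (hq : 2 ≤ q) (hk : 3 ≤ k) (hkq : k ≤ q)
    {x y : ℝ} (hx0 : 0 ≤ x) (hy0 : 0 ≤ y)
    (hxA : x ^ 2 * (2 * κ * (2 + θ) * q) ≤ 1)
    (hyB : y * (κ * Real.sqrt (1 + 1 / θ) * q) ≤ 1) :
    ((k:ℝ) - 1) * (x ^ 2 + 2 * (x ^ 2 + y ^ 2) * ((1 + y) ^ (k - 2) - 1)) ≤ 1 := by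
  have hκ0 : (0:ℝ) < κ := by linarith
  have hq2 : (2:ℝ) ≤ (q:ℝ) := by exact_mod_cast hq
  have hk3 : (3:ℝ) ≤ (k:ℝ) := by exact_mod_cast hk
  have hkq' : (k:ℝ) ≤ (q:ℝ) := by exact_mod_cast hkq
  have hθinv : 2 ≤ 1 + 1/θ := by
    have : 1 < 1/θ := by rw [lt_div_iff₀ hθ0]; linarith
    linarith
  set s := Real.sqrt (1 + 1/θ) with hsdef
  have hs2 : Real.sqrt 2 ≤ s := Real.sqrt_le_sqrt hθinv
  have hsqrt2 : (1.414:ℝ) ≤ Real.sqrt 2 := by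
    rw [show (2:ℝ) = 1.414^2 + 0.000604 by norm_num]
    have : Real.sqrt (1.414^2) ≤ Real.sqrt (1.414^2 + 0.000604) :=
      Real.sqrt_le_sqrt (by norm_num)
    rwa [Real.sqrt_sq (by norm_num)] at this
  have hs : (1.414:ℝ) ≤ s := le_trans hsqrt2 hs2
  have hs0 : (0:ℝ) ≤ s := by linarith
  have hssq : s ^ 2 = 1 + 1/θ := Real.sq_sqrt (by linarith)
  have hq0 : (0:ℝ) < (q:ℝ) := by linarith
  -- cast for k-2
  have hcast : ((k - 2 : ℕ) : ℝ) = (k:ℝ) - 2 := by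
    have h2k : (2:ℕ) ≤ k := by omega
    push_cast [Nat.cast_sub h2k]; ring
  -- c := (k-2)*y ≤ 0.5569
  have hks : (1.79578:ℝ) ≤ κ * s := by
    have := mul_le_mul hκ hs (by norm_num) (by linarith)
    nlinarith [this]
  have hqy : (q:ℝ) * y ≤ 1 / 1.79578 := by
    rw [le_div_iff₀ (by norm_num)]
    calc (q:ℝ) * y * 1.79578 = y * (1.79578 * q) := by ring
      _ ≤ y * (κ * s * q) := by
          apply mul_le_mul_of_nonneg_left _ hy0
          exact mul_le_mul_of_nonneg_right hks (le_of_lt hq0)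
      _ ≤ 1 := hyB
  have hc_le : ((k:ℝ) - 2) * y ≤ 0.5569 := by
    have h1 : ((k:ℝ) - 2) * y ≤ (q:ℝ) * y := mul_le_mul_of_nonneg_right (by linarith) hy0
    have : (1:ℝ)/1.79578 ≤ 0.5569 := by norm_num
    linarith
  have hc0 : (0:ℝ) ≤ ((k:ℝ) - 2) * y := mul_nonneg (by linarith) hy0
  -- P bounds
  have hP : (1 + y) ^ (k - 2) ≤ 1 + ((k:ℝ)-2) * y + (((k:ℝ)-2) * y) ^ 2 := by
    have h := one_add_pow_le (k - 2) hy0 (by rw [hcast]; linarith)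
    rwa [hcast] at h
  set P1 := (1 + y) ^ (k-2) - 1 with hP1def
  have hP1b : P1 ≤ 0.8671 := by
    have : ((k:ℝ)-2)*y + (((k:ℝ)-2)*y)^2 ≤ 0.5569 + 0.5569^2 := by nlinarith
    have h2 : (0.5569:ℝ) + 0.5569^2 ≤ 0.8671 := by norm_num
    simp only [hP1def]
    linarith [hP]
  have hP1a : 0 ≤ P1 := by
    simp only [hP1def]
    have : (1:ℝ) ≤ (1+y)^(k-2) := one_le_pow₀ (by linarith)
    linarith
  -- bucket bounds
  have hu4 : ((k:ℝ)-1) * x^2 * (4*κ) ≤ 1 := by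
    have hh : 4*((k:ℝ)-1) ≤ 2*(2+θ)*(q:ℝ) := by nlinarith [mul_nonneg hθ0.le hq0.le]
    have h1 : ((k:ℝ)-1) * (4*κ) ≤ 2 * κ * (2+θ) * q := by
      calc ((k:ℝ)-1) * (4*κ) = κ * (4*((k:ℝ)-1)) := by ring
        _ ≤ κ * (2*(2+θ)*(q:ℝ)) := mul_le_mul_of_nonneg_left hh (by linarith)
        _ = 2 * κ * (2+θ) * q := by ring
    calc ((k:ℝ)-1) * x^2 * (4*κ) = x^2 * (((k:ℝ)-1) * (4*κ)) := by ring
      _ ≤ x^2 * (2 * κ * (2+θ) * q) := by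
          apply mul_le_mul_of_nonneg_left h1 (sq_nonneg x)
      _ ≤ 1 := hxA
  have hyB2 : y^2 * (κ^2 * (1+1/θ) * (q:ℝ)^2) ≤ 1 := by
    have hnn : 0 ≤ y * (κ * s * (q:ℝ)) := by positivity
    have hsq : (y * (κ * s * (q:ℝ)))^2 ≤ 1 := by nlinarith
    calc y^2 * (κ^2 * (1+1/θ) * (q:ℝ)^2) = (y * (κ * s * (q:ℝ)))^2 := by
          rw [← hssq]; ring
      _ ≤ 1 := hsq
  have hv4 : ((k:ℝ)-1) * y^2 * (4*κ^2) ≤ 1 := by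
    have hkk : (0:ℝ) ≤ κ^2 := sq_nonneg κ
    have hh : 4*((k:ℝ)-1) ≤ 2*(q:ℝ)^2 := by nlinarith [sq_nonneg ((q:ℝ)-1)]
    have h1 : ((k:ℝ)-1) * (4*κ^2) ≤ κ^2 * (1+1/θ) * (q:ℝ)^2 := by
      calc ((k:ℝ)-1) * (4*κ^2) = κ^2 * (4*((k:ℝ)-1)) := by ring
        _ ≤ κ^2 * (2*(q:ℝ)^2) := mul_le_mul_of_nonneg_left hh hkk
        _ ≤ κ^2 * (1+1/θ) * (q:ℝ)^2 := by
            nlinarith [mul_nonneg hkk (sq_nonneg (q:ℝ))]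
    calc ((k:ℝ)-1) * y^2 * (4*κ^2) = y^2 * (((k:ℝ)-1) * (4*κ^2)) := by ring
      _ ≤ y^2 * (κ^2 * (1+1/θ) * (q:ℝ)^2) := by
          apply mul_le_mul_of_nonneg_left h1 (sq_nonneg y)
      _ ≤ 1 := hyB2
  -- final combination
  have hgoal : ((k:ℝ) - 1) * (x ^ 2 + 2 * (x ^ 2 + y ^ 2) * P1)
      = (((k:ℝ)-1) * x^2) * (1 + 2*P1) + 2 * (((k:ℝ)-1) * y^2) * P1 := by ring
  rw [hgoal]
  set u := ((k:ℝ)-1) * x^2 with hu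
  set v := ((k:ℝ)-1) * y^2 with hv
  have hu0 : 0 ≤ u := mul_nonneg (by linarith) (sq_nonneg x)
  have hv0 : 0 ≤ v := mul_nonneg (by linarith) (sq_nonneg y)
  have h4k2 : (0:ℝ) < 4*κ^2 := by positivity
  rw [← mul_le_mul_iff_of_pos_right h4k2]
  have hP1c : 1 + 2*P1 ≤ 2.7342 := by linarith
  have t1 : u*(1+2*P1)*(4*κ) ≤ 2.7342 := by
    have h := mul_le_mul_of_nonneg_right hu4 (show (0:ℝ) ≤ 1+2*P1 by linarith)
    have h2 : u*(1+2*P1)*(4*κ) = u * (4*κ) * (1+2*P1) := by ring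
    rw [h2]
    calc u * (4*κ) * (1+2*P1) ≤ 1*(1+2*P1) := h
      _ ≤ 2.7342 := by linarith
  have t2 : 2*v*P1*(4*κ^2) ≤ 1.7342 := by
    have h := mul_le_mul_of_nonneg_right hv4 (show (0:ℝ) ≤ 2*P1 by linarith)
    have h2 : 2*v*P1*(4*κ^2) = v * (4*κ^2) * (2*P1) := by ring
    rw [h2]
    calc v * (4*κ^2) * (2*P1) ≤ 1*(2*P1) := h
      _ ≤ 1.7342 := by linarith
  have t3 : u*(1+2*P1)*(4*κ)*κ ≤ 2.7342*κ :=
    mul_le_mul_of_nonneg_right t1 (by linarith)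
  have t4 : 2.7342*κ + 1.7342 ≤ 4*κ^2 := by nlinarith [sq_nonneg (κ - 1.27)]
  calc (u*(1+2*P1) + 2*v*P1) * (4*κ^2)
      = u*(1+2*P1)*(4*κ)*κ + 2*v*P1*(4*κ^2) := by ring
    _ ≤ 2.7342*κ + 1.7342 := add_le_add t3 t2
    _ ≤ 4*κ^2 := t4
    _ = 1*(4*κ^2) := by ring

section MeasureAux

open Finset

variable {Ω : Type*} [MeasurableSpace Ω] {μ : Measure Ω} [IsProbabilityMeasure μ]
variable {n : ℕ} {X : Fin n → Ω → ℝ}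

lemma int_pow (hX : ∀ i, Measurable (X i))
    (hmom : ∀ i, ∀ q : ℝ, 0 < q → Integrable (fun ω => |X i ω| ^ q) μ)
    (i : Fin n) (k : ℕ) : Integrable (fun ω => |X i ω| ^ k) μ := by
  rcases Nat.eq_zero_or_pos k with hk | hk
  · subst hk; simpa using (integrable_const (1:ℝ) (μ := μ))
  · have h := hmom i k (by exact_mod_cast hk)
    have he : (fun ω => |X i ω| ^ (k:ℝ)) = fun ω => |X i ω| ^ k := by
      funext ω; rw [Real.rpow_natCast]
    rwa [he] at h

lemma indep_master (hX : ∀ i, Measurable (X i))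
    (hindep : iIndepFun X μ)
    (i : Fin n) (S : Finset (Fin n)) (hiS : i ∉ S)
    {φ : ℝ → ℝ} (hφ : Measurable φ) {ψ : (S → ℝ) → ℝ} (hψ : Measurable ψ) :
    IndepFun (fun ω => φ (X i ω)) (fun ω => ψ (fun j => X j ω)) μ := by
  have hd : Disjoint ({i} : Finset (Fin n)) S := by
    simp [Finset.disjoint_singleton_left, hiS]
  have h := hindep.indepFun_finset {i} S hd hX
  have hφ' : Measurable fun v : ({i} : Finset (Fin n)) → ℝ =>
      φ (v ⟨i, Finset.mem_singleton_self i⟩) := hφ.comp (measurable_pi_apply _)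
  exact h.comp hφ' hψ

lemma indep_sum (hX : ∀ i, Measurable (X i))
    (hindep : iIndepFun X μ)
    (i : Fin n) (S : Finset (Fin n)) (hiS : i ∉ S)
    {φ ψ : ℝ → ℝ} (hφ : Measurable φ) (hψ : Measurable ψ) :
    IndepFun (fun ω => φ (X i ω)) (fun ω => ψ (∑ j ∈ S, X j ω)) μ := by
  have hmeas : Measurable fun v : S → ℝ => ψ (∑ j : S, v j) := by
    apply hψ.comp
    exact Finset.measurable_sum Finset.univ (fun j _ => measurable_pi_apply j)
  have h := indep_master hX hindep i S hiS hφ (ψ := fun v => ψ (∑ j : S, v j)) hmeas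
  have he : (fun ω => ψ (∑ j : S, X (j:Fin n) ω)) = fun ω => ψ (∑ j ∈ S, X j ω) := by
    funext ω; congr 1
    exact Finset.sum_coe_sort S fun j => X j ω
  rwa [he] at h

/-- The maximum of `|X j|` over `j ≠ i`. -/
noncomputable def Yaux (X : Fin n → Ω → ℝ) (i : Fin n) (ω : Ω) : ℝ :=
  ⨆ j : {l : Fin n // l ∈ Finset.univ.erase i}, |X j.1 ω|

lemma indep_Yi (hX : ∀ i, Measurable (X i))
    (hindep : iIndepFun X μ)
    (i : Fin n) {φ ψ : ℝ → ℝ} (hφ : Measurable φ) (hψ : Measurable ψ) :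
    IndepFun (fun ω => φ (X i ω)) (fun ω => ψ (Yaux X i ω)) μ := by
  have hmeas : Measurable fun v : {l : Fin n // l ∈ Finset.univ.erase i} → ℝ =>
      ψ (⨆ j, |v j|) := by
    apply hψ.comp
    exact Measurable.iSup (fun j => (measurable_pi_apply j).abs)
  exact indep_master hX hindep i (Finset.univ.erase i) (Finset.notMem_erase i _) hφ
    (ψ := fun v => ψ (⨆ j, |v j|)) hmeas

lemma meas_Z (hX : ∀ i, Measurable (X i)) (S : Finset (Fin n)) :
    Measurable (fun ω => ∑ j ∈ S, X j ω) :=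
  Finset.measurable_sum S (fun j _ => hX j)

lemma int_Zpow (hX : ∀ i, Measurable (X i))
    (hindep : iIndepFun X μ)
    (hmom : ∀ i, ∀ q : ℝ, 0 < q → Integrable (fun ω => |X i ω| ^ q) μ)
    (S : Finset (Fin n)) : ∀ (k : ℕ), Integrable (fun ω => |∑ j ∈ S, X j ω| ^ k) μ := by
  classical
  induction S using Finset.induction_on with
  | empty =>
    intro k
    simp only [Finset.sum_empty, abs_zero]
    exact integrable_const _
  | insert _ _ hiS IH =>
    rename_i i S
    intro k
    have hg : Integrable (fun ω => ∑ j ∈ Finset.range (k+1),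
        |X i ω| ^ j * |∑ l ∈ S, X l ω| ^ (k - j) * ((k.choose j : ℕ) : ℝ)) μ := by
      apply integrable_finset_sum
      intro j _
      have hind : IndepFun (fun ω => |X i ω| ^ j) (fun ω => |∑ l ∈ S, X l ω| ^ (k-j)) μ :=
        indep_sum hX hindep i S hiS (measurable_abs.pow_const j) (measurable_abs.pow_const (k-j))
      exact (hind.integrable_mul (int_pow hX hmom i j) (IH (k-j))).mul_const _
    apply hg.mono' (((meas_Z hX _).abs.pow_const k).aestronglyMeasurable)
    filter_upwards with ω
    rw [Real.norm_eq_abs, abs_pow, abs_abs]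
    have h1 : |∑ j ∈ insert i S, X j ω| ≤ |X i ω| + |∑ l ∈ S, X l ω| := by
      rw [Finset.sum_insert hiS]; exact abs_add_le _ _
    calc |∑ j ∈ insert i S, X j ω| ^ k
        ≤ (|X i ω| + |∑ l ∈ S, X l ω|) ^ k :=
          pow_le_pow_left₀ (abs_nonneg _) h1 k
      _ = ∑ j ∈ Finset.range (k+1),
            |X i ω| ^ j * |∑ l ∈ S, X l ω| ^ (k - j) * ((k.choose j : ℕ) : ℝ) :=
          add_pow _ _ k

lemma int_mulZ (hX : ∀ i, Measurable (X i))
    (hindep : iIndepFun X μ)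
    (hmom : ∀ i, ∀ q : ℝ, 0 < q → Integrable (fun ω => |X i ω| ^ q) μ)
    (i : Fin n) (S : Finset (Fin n)) (hiS : i ∉ S) (a b : ℕ) :
    Integrable (fun ω => |X i ω| ^ a * |∑ j ∈ S, X j ω| ^ b) μ :=
  (indep_sum hX hindep i S hiS (measurable_abs.pow_const a)
    (measurable_abs.pow_const b)).integrable_mul (int_pow hX hmom i a)
    (int_Zpow hX hindep hmom S b)

lemma integral_mulZ (hX : ∀ i, Measurable (X i))
    (hindep : iIndepFun X μ)
    (hmom : ∀ i, ∀ q : ℝ, 0 < q → Integrable (fun ω => |X i ω| ^ q) μ)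
    (i : Fin n) (S : Finset (Fin n)) (hiS : i ∉ S) (a b : ℕ) :
    ∫ ω, |X i ω| ^ a * |∑ j ∈ S, X j ω| ^ b ∂μ
      = (∫ ω, |X i ω| ^ a ∂μ) * (∫ ω, |∑ j ∈ S, X j ω| ^ b ∂μ) :=
  (indep_sum hX hindep i S hiS (measurable_abs.pow_const a)
    (measurable_abs.pow_const b)).integral_mul_eq_mul_integral
    (int_pow hX hmom i a).aestronglyMeasurable (int_Zpow hX hindep hmom S b).aestronglyMeasurable

lemma int_X (hX : ∀ i, Measurable (X i))
    (hmom : ∀ i, ∀ q : ℝ, 0 < q → Integrable (fun ω => |X i ω| ^ q) μ)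
    (i : Fin n) : Integrable (X i) μ := by
  have h := int_pow hX hmom i 1
  simp only [pow_one] at h
  apply h.mono' (hX i).aestronglyMeasurable
  filter_upwards with ω
  rw [Real.norm_eq_abs]

lemma intX2 (hX : ∀ i, Measurable (X i))
    (hmom : ∀ i, ∀ q : ℝ, 0 < q → Integrable (fun ω => |X i ω| ^ q) μ)
    (i : Fin n) : Integrable (fun ω => (X i ω)^2) μ := by
  have h := int_pow hX hmom i 2
  have he : (fun ω => |X i ω|^2) = fun ω => (X i ω)^2 := by
    funext ω; rw [sq_abs]
  rwa [he] at h

lemma integral_Z_sq (hX : ∀ i, Measurable (X i))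
    (hindep : iIndepFun X μ)
    (hcentered : ∀ i, ∫ ω, X i ω ∂μ = 0)
    (hmom : ∀ i, ∀ q : ℝ, 0 < q → Integrable (fun ω => |X i ω| ^ q) μ)
    (S : Finset (Fin n)) :
    ∫ ω, (∑ j ∈ S, X j ω)^2 ∂μ = ∑ j ∈ S, ∫ ω, (X j ω)^2 ∂μ := by
  classical
  have hint : ∀ i j : Fin n, Integrable (fun ω => X i ω * X j ω) μ := by
    intro i j
    rcases eq_or_ne i j with rfl | hij
    · have h := intX2 hX hmom i
      have he : (fun ω => (X i ω)^2) = fun ω => X i ω * X i ω := by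
        funext ω; ring
      rwa [he] at h
    · exact (hindep.indepFun hij).integrable_mul (int_X hX hmom i) (int_X hX hmom j)
  have h1 : (fun ω => (∑ j ∈ S, X j ω)^2) = fun ω => ∑ i ∈ S, ∑ j ∈ S, X i ω * X j ω := by
    funext ω; rw [sq, Finset.sum_mul_sum]
  rw [h1, integral_finset_sum _ (fun i _ => integrable_finset_sum _ (fun j _ => hint i j))]
  refine Finset.sum_congr rfl ?_
  intro i hiS
  rw [integral_finset_sum _ (fun j _ => hint i j), Finset.sum_eq_single i]
  · congr 1; funext ω; ring
  · intro j _ hji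
    have hind := hindep.indepFun (Ne.symm hji : i ≠ j)
    have hmul := hind.integral_mul_eq_mul_integral (int_X hX hmom i).aestronglyMeasurable (int_X hX hmom j).aestronglyMeasurable
    have he : (fun a => X i a * X j a) = X i * X j := rfl
    rw [he, hmul, hcentered i, zero_mul]
  · intro h; exact absurd hiS h

end MeasureAux

section MeasureAux2

open Finset

variable {Ω : Type*} [MeasurableSpace Ω] {μ : Measure Ω} [IsProbabilityMeasure μ]
variable {n : ℕ} {X : Fin n → Ω → ℝ}

lemma Y_nonneg (ω : Ω) : 0 ≤ ⨆ i, |X i ω| :=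
  Real.iSup_nonneg fun i => abs_nonneg _

lemma Yaux_nonneg (i : Fin n) (ω : Ω) : 0 ≤ Yaux X i ω :=
  Real.iSup_nonneg fun j => abs_nonneg _

lemma le_Y (hn : 0 < n) (i : Fin n) (ω : Ω) : |X i ω| ≤ ⨆ j, |X j ω| := by
  exact le_ciSup (f := fun j => |X j ω|) (Set.Finite.bddAbove (Set.finite_range _)) i

lemma Yaux_le_Y (i : Fin n) (ω : Ω) : Yaux X i ω ≤ ⨆ j, |X j ω| := by
  rcases isEmpty_or_nonempty {l : Fin n // l ∈ Finset.univ.erase i} with he | hne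
  · rw [Yaux, Real.iSup_of_isEmpty]; exact Y_nonneg ω
  · exact ciSup_le fun j => le_ciSup (f := fun l : Fin n => |X l ω|)
      (Set.Finite.bddAbove (Set.finite_range _)) j.1

lemma le_Yaux (i : Fin n) {j : Fin n} (hji : j ≠ i) (ω : Ω) : |X j ω| ≤ Yaux X i ω :=
  le_ciSup (f := fun l : {l : Fin n // l ∈ Finset.univ.erase i} => |X l.1 ω|)
    (Set.Finite.bddAbove (Set.finite_range _)) ⟨j, by simp [hji]⟩

lemma Y_le_max (hn : 0 < n) (i : Fin n) (ω : Ω) :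
    (⨆ j, |X j ω|) ≤ max |X i ω| (Yaux X i ω) := by
  have : Nonempty (Fin n) := Fin.pos_iff_nonempty.mp hn
  apply ciSup_le
  intro j
  rcases eq_or_ne j i with rfl | hji
  · exact le_max_left _ _
  · exact le_trans (le_Yaux i hji ω) (le_max_right _ _)

lemma Y_meas (hX : ∀ i, Measurable (X i)) : Measurable (fun ω => ⨆ i, |X i ω|) :=
  Measurable.iSup (fun i => (hX i).abs)

lemma Yaux_meas (hX : ∀ i, Measurable (X i)) (i : Fin n) : Measurable (Yaux X i) :=
  Measurable.iSup (fun j => (hX j.1).abs)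

lemma Y_pow_le_sum (hn : 0 < n) (l : ℕ) (ω : Ω) :
    (⨆ j, |X j ω|) ^ l ≤ ∑ i, |X i ω| ^ l := by
  have : Nonempty (Fin n) := Fin.pos_iff_nonempty.mp hn
  obtain ⟨i0, hi0⟩ := Finite.exists_max (fun i => |X i ω|)
  have h1 : (⨆ j, |X j ω|) ≤ |X i0 ω| := ciSup_le hi0
  calc (⨆ j, |X j ω|) ^ l ≤ |X i0 ω| ^ l := pow_le_pow_left₀ (Y_nonneg ω) h1 l
    _ ≤ ∑ i, |X i ω| ^ l :=
        Finset.single_le_sum (f := fun i => |X i ω| ^ l)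
          (fun i _ => pow_nonneg (abs_nonneg _) l) (Finset.mem_univ i0)

lemma int_Ypow (hX : ∀ i, Measurable (X i))
    (hmom : ∀ i, ∀ q : ℝ, 0 < q → Integrable (fun ω => |X i ω| ^ q) μ)
    (hn : 0 < n) (l : ℕ) : Integrable (fun ω => (⨆ j, |X j ω|) ^ l) μ := by
  apply Integrable.mono' (integrable_finset_sum _ fun i _ => int_pow hX hmom i l)
    (((Y_meas hX).pow_const l).aestronglyMeasurable)
  filter_upwards with ω
  rw [Real.norm_eq_abs, abs_of_nonneg (pow_nonneg (Y_nonneg ω) l)]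
  exact Y_pow_le_sum hn l ω

lemma int_Yauxpow (hX : ∀ i, Measurable (X i))
    (hmom : ∀ i, ∀ q : ℝ, 0 < q → Integrable (fun ω => |X i ω| ^ q) μ)
    (hn : 0 < n) (i : Fin n) (l : ℕ) : Integrable (fun ω => (Yaux X i ω) ^ l) μ := by
  apply Integrable.mono' (int_Ypow hX hmom hn l)
    (((Yaux_meas hX i).pow_const l).aestronglyMeasurable)
  filter_upwards with ω
  rw [Real.norm_eq_abs, abs_of_nonneg (pow_nonneg (Yaux_nonneg i ω) l)]
  exact pow_le_pow_left₀ (Yaux_nonneg i ω) (Yaux_le_Y i ω) l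

lemma integral_Yauxpow_le (hX : ∀ i, Measurable (X i))
    (hmom : ∀ i, ∀ q : ℝ, 0 < q → Integrable (fun ω => |X i ω| ^ q) μ)
    (hn : 0 < n) (i : Fin n) (l : ℕ) :
    ∫ ω, (Yaux X i ω) ^ l ∂μ ≤ ∫ ω, (⨆ j, |X j ω|) ^ l ∂μ := by
  apply integral_mono (int_Yauxpow hX hmom hn i l) (int_Ypow hX hmom hn l)
  intro ω
  exact pow_le_pow_left₀ (Yaux_nonneg i ω) (Yaux_le_Y i ω) l

lemma argmax_sum_le (hn : 0 < n) (l : ℕ) (ω : Ω) :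
    ∑ i, (if Yaux X i ω < |X i ω| then |X i ω| ^ l else 0) ≤ (⨆ j, |X j ω|) ^ l := by
  by_cases hex : ∃ i, Yaux X i ω < |X i ω|
  · obtain ⟨i0, hi0⟩ := hex
    rw [Finset.sum_eq_single i0]
    · rw [if_pos hi0]
      exact pow_le_pow_left₀ (abs_nonneg _) (le_Y hn i0 ω) l
    · intro j _ hj
      rw [if_neg]
      intro hcon
      have h1 : |X j ω| ≤ Yaux X i0 ω := le_Yaux i0 hj ω
      have h2 : |X i0 ω| ≤ Yaux X j ω := le_Yaux j (Ne.symm hj) ω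
      linarith
    · intro h; exact absurd (Finset.mem_univ i0) h
  · push_neg at hex
    rw [Finset.sum_eq_zero]
    · exact pow_nonneg (Y_nonneg ω) l
    · intro j _
      rw [if_neg (not_lt.mpr (hex j))]

/-- Key moment-sum bound: `∑ᵢ E|Xᵢ|ˡ ≤ tˡ⁻²σ² + EYˡ·σ²/t² + EYˡ`. -/
lemma sum_moment_le (hX : ∀ i, Measurable (X i))
    (hindep : iIndepFun X μ)
    (hmom : ∀ i, ∀ q : ℝ, 0 < q → Integrable (fun ω => |X i ω| ^ q) μ)
    (hn : 0 < n) (l : ℕ) (hl : 2 ≤ l) {t : ℝ} (ht : 0 < t) :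
    ∑ i, ∫ ω, |X i ω| ^ l ∂μ ≤
      t ^ (l-2) * (∑ i, ∫ ω, (X i ω)^2 ∂μ)
      + (∫ ω, (⨆ j, |X j ω|) ^ l ∂μ) * ((∑ i, ∫ ω, (X i ω)^2 ∂μ) / t^2)
      + ∫ ω, (⨆ j, |X j ω|) ^ l ∂μ := by
  classical
  set Y : Ω → ℝ := fun ω => ⨆ j, |X j ω| with hYdef
  set EY : ℝ := ∫ ω, Y ω ^ l ∂μ with hEY
  have hEY0 : 0 ≤ EY := integral_nonneg fun ω => pow_nonneg (Y_nonneg ω) l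
  -- indicator functions
  set f1 : Fin n → Ω → ℝ := fun i ω => if |X i ω| ≤ t then |X i ω| ^ l else 0 with hf1
  set f2 : Fin n → Ω → ℝ := fun i ω => if t < |X i ω| then |X i ω| ^ l else 0 with hf2
  set ind : Fin n → Ω → ℝ := fun i ω => if t < |X i ω| then 1 else 0 with hind
  set jnd : Fin n → Ω → ℝ := fun i ω => if Yaux X i ω < |X i ω| then |X i ω| ^ l else 0
    with hjnd
  have hmf1 : ∀ i, Measurable (f1 i) := fun i =>
    Measurable.ite (measurableSet_le (hX i).abs measurable_const)
      ((hX i).abs.pow_const l) measurable_const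
  have hmf2 : ∀ i, Measurable (f2 i) := fun i =>
    Measurable.ite (measurableSet_lt measurable_const (hX i).abs)
      ((hX i).abs.pow_const l) measurable_const
  have hmind : ∀ i, Measurable (ind i) := fun i =>
    Measurable.ite (measurableSet_lt measurable_const (hX i).abs)
      measurable_const measurable_const
  have hmjnd : ∀ i, Measurable (jnd i) := fun i =>
    Measurable.ite (measurableSet_lt (Yaux_meas hX i) (hX i).abs)
      ((hX i).abs.pow_const l) measurable_const
  have hintf1 : ∀ i, Integrable (f1 i) μ := by
    intro i
    apply (int_pow hX hmom i l).mono' (hmf1 i).aestronglyMeasurable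
    filter_upwards with ω
    simp only [Real.norm_eq_abs, hf1]
    split
    · rw [abs_of_nonneg (pow_nonneg (abs_nonneg _) l)]
    · simpa using pow_nonneg (abs_nonneg (X i ω)) l
  have hintf2 : ∀ i, Integrable (f2 i) μ := by
    intro i
    apply (int_pow hX hmom i l).mono' (hmf2 i).aestronglyMeasurable
    filter_upwards with ω
    simp only [Real.norm_eq_abs, hf2]
    split
    · rw [abs_of_nonneg (pow_nonneg (abs_nonneg _) l)]
    · simpa using pow_nonneg (abs_nonneg (X i ω)) l
  have hintind : ∀ i, Integrable (ind i) μ := by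
    intro i
    apply (integrable_const (1:ℝ)).mono' (hmind i).aestronglyMeasurable
    filter_upwards with ω
    simp only [Real.norm_eq_abs, hind]
    split <;> simp
  have hintjnd : ∀ i, Integrable (jnd i) μ := by
    intro i
    apply (int_pow hX hmom i l).mono' (hmjnd i).aestronglyMeasurable
    filter_upwards with ω
    simp only [Real.norm_eq_abs, hjnd]
    split
    · rw [abs_of_nonneg (pow_nonneg (abs_nonneg _) l)]
    · simpa using pow_nonneg (abs_nonneg (X i ω)) l
  -- split |X i|^l = f1 + f2
  have hsplit : ∀ i, ∫ ω, |X i ω| ^ l ∂μ = ∫ ω, f1 i ω ∂μ + ∫ ω, f2 i ω ∂μ := by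
    intro i
    rw [← integral_add (hintf1 i) (hintf2 i)]
    apply integral_congr_ae
    filter_upwards with ω
    simp only [hf1, hf2]
    by_cases h : |X i ω| ≤ t
    · rw [if_pos h, if_neg (not_lt.mpr h), add_zero]
    · rw [if_neg h, if_pos (lt_of_not_ge h), zero_add]
  -- bound f1 interval
  have hb1 : ∀ i, ∫ ω, f1 i ω ∂μ ≤ t ^ (l-2) * ∫ ω, (X i ω)^2 ∂μ := by
    intro i
    rw [← integral_const_mul]
    apply integral_mono (hintf1 i) ((intX2 hX hmom i).const_mul _)
    intro ω
    simp only [hf1]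
    split
    · rename_i h
      have h1 : |X i ω| ^ l = |X i ω| ^ (l-2) * |X i ω| ^ 2 := by
        rw [← pow_add]; congr 1; omega
      rw [h1, ← sq_abs (X i ω)]
      apply mul_le_mul_of_nonneg_right _ (pow_nonneg (abs_nonneg _) 2)
      exact pow_le_pow_left₀ (abs_nonneg _) h _
    · positivity
  -- bound f2 pointwise
  have hb2pt : ∀ i ω, f2 i ω ≤ ind i ω * Yaux X i ω ^ l + jnd i ω := by
    intro i ω
    simp only [hf2, hind, hjnd]
    by_cases h : t < |X i ω|
    · rw [if_pos h, if_pos h, one_mul]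
      by_cases h2 : Yaux X i ω < |X i ω|
      · rw [if_pos h2]
        have := pow_nonneg (Yaux_nonneg (X := X) i ω) l
        linarith
      · rw [if_neg h2]
        push_neg at h2
        rw [add_zero]
        exact pow_le_pow_left₀ (abs_nonneg _) h2 l
    · rw [if_neg h, if_neg h, zero_mul, zero_add]
      split
      · exact pow_nonneg (abs_nonneg _) l
      · exact le_rfl
  -- integral of ind: Chebyshev
  have hindle : ∀ i, ∫ ω, ind i ω ∂μ ≤ (∫ ω, (X i ω)^2 ∂μ) / t^2 := by
    intro i
    have hdiv : ∫ ω, (X i ω)^2 / t^2 ∂μ = (∫ ω, (X i ω)^2 ∂μ) / t^2 := integral_div _ _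
    rw [← hdiv]
    apply integral_mono (hintind i) ((intX2 hX hmom i).div_const _)
    intro ω
    simp only [hind]
    split
    · rename_i h
      rw [le_div_iff₀ (by positivity), one_mul]
      calc t^2 ≤ |X i ω|^2 := pow_le_pow_left₀ ht.le h.le 2
        _ = (X i ω)^2 := sq_abs _
    · positivity
  have hind_nonneg : ∀ i, 0 ≤ ∫ ω, ind i ω ∂μ := by
    intro i
    apply integral_nonneg
    intro ω
    simp only [hind]
    split <;> norm_num
  -- integral of ind * Yaux^l factorizes
  have hϕm : Measurable (fun x : ℝ => if t < |x| then (1:ℝ) else 0) :=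
    Measurable.ite (measurableSet_lt measurable_const measurable_abs) measurable_const
      measurable_const
  have hindYi : ∀ i, IndepFun (ind i) (fun ω => Yaux X i ω ^ l) μ := by
    intro i
    exact indep_Yi hX hindep i hϕm (measurable_id.pow_const l)
  have hint_g : ∀ i, Integrable (fun ω => ind i ω * Yaux X i ω ^ l) μ := by
    intro i
    exact (hindYi i).integrable_mul (hintind i) (int_Yauxpow hX hmom hn i l)
  have hgint : ∀ i, ∫ ω, ind i ω * Yaux X i ω ^ l ∂μ
      = (∫ ω, ind i ω ∂μ) * (∫ ω, Yaux X i ω ^ l ∂μ) :=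
    fun i => (hindYi i).integral_mul_eq_mul_integral (hintind i).aestronglyMeasurable (int_Yauxpow hX hmom hn i l).aestronglyMeasurable
  -- bound f2 integral
  have hb2 : ∀ i, ∫ ω, f2 i ω ∂μ ≤ (∫ ω, ind i ω ∂μ) * EY + ∫ ω, jnd i ω ∂μ := by
    intro i
    have h1 : ∫ ω, f2 i ω ∂μ ≤ ∫ ω, (ind i ω * Yaux X i ω ^ l + jnd i ω) ∂μ :=
      integral_mono (hintf2 i) ((hint_g i).add (hintjnd i)) (hb2pt i)
    rw [integral_add (hint_g i) (hintjnd i), hgint i] at h1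
    have h2 : (∫ ω, ind i ω ∂μ) * (∫ ω, Yaux X i ω ^ l ∂μ)
        ≤ (∫ ω, ind i ω ∂μ) * EY :=
      mul_le_mul_of_nonneg_left (integral_Yauxpow_le hX hmom hn i l) (hind_nonneg i)
    linarith
  -- sum of jnd integrals
  have hjndsum : ∑ i, ∫ ω, jnd i ω ∂μ ≤ EY := by
    rw [← integral_finset_sum _ (fun i _ => hintjnd i)]
    apply integral_mono (integrable_finset_sum _ fun i _ => hintjnd i) (int_Ypow hX hmom hn l)
    intro ω
    simpa only [hjnd] using argmax_sum_le (X := X) hn l ω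
  -- sum of ind integrals
  have hindsum : ∑ i, ∫ ω, ind i ω ∂μ ≤ (∑ i, ∫ ω, (X i ω)^2 ∂μ) / t^2 := by
    rw [Finset.sum_div]
    exact Finset.sum_le_sum fun i _ => hindle i
  -- assemble
  have step1 : ∑ i, ∫ ω, |X i ω| ^ l ∂μ
      = ∑ i, ∫ ω, f1 i ω ∂μ + ∑ i, ∫ ω, f2 i ω ∂μ := by
    rw [← Finset.sum_add_distrib]
    exact Finset.sum_congr rfl fun i _ => hsplit i
  rw [step1]
  have step2 : ∑ i, ∫ ω, f1 i ω ∂μ ≤ t ^ (l-2) * (∑ i, ∫ ω, (X i ω)^2 ∂μ) := by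
    rw [Finset.mul_sum]
    exact Finset.sum_le_sum fun i _ => hb1 i
  have step3 : ∑ i, ∫ ω, f2 i ω ∂μ
      ≤ EY * ((∑ i, ∫ ω, (X i ω)^2 ∂μ) / t^2) + EY := by
    calc ∑ i, ∫ ω, f2 i ω ∂μ
        ≤ ∑ i, ((∫ ω, ind i ω ∂μ) * EY + ∫ ω, jnd i ω ∂μ) :=
          Finset.sum_le_sum fun i _ => hb2 i
      _ = (∑ i, ∫ ω, ind i ω ∂μ) * EY + ∑ i, ∫ ω, jnd i ω ∂μ := by
          rw [Finset.sum_add_distrib, Finset.sum_mul]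
      _ ≤ ((∑ i, ∫ ω, (X i ω)^2 ∂μ) / t^2) * EY + EY := by
          have := mul_le_mul_of_nonneg_right hindsum hEY0
          linarith
      _ = EY * ((∑ i, ∫ ω, (X i ω)^2 ∂μ) / t^2) + EY := by ring
  linarith

/-- Lyapunov / power-mean inequality on a probability space. -/
lemma lyapunov {f : Ω → ℝ} (hf : Measurable f) (hnn : ∀ ω, 0 ≤ f ω)
    (hint : ∀ k : ℕ, Integrable (fun ω => f ω ^ k) μ)
    {l q : ℕ} (hl : 1 ≤ l) (hlq : l ≤ q) :
    ∫ ω, f ω ^ l ∂μ ≤ ((∫ ω, f ω ^ q ∂μ) ^ ((1:ℝ)/q)) ^ l := by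
  have hq1 : 1 ≤ q := le_trans hl hlq
  have hq0 : (q:ℝ) ≠ 0 := by positivity
  have hIq0 : 0 ≤ ∫ ω, f ω ^ q ∂μ := integral_nonneg fun ω => pow_nonneg (hnn ω) q
  rcases eq_or_lt_of_le hIq0 with hIq | hIq
  · -- degenerate case
    have hf0 : (fun ω => f ω ^ q) =ᵐ[μ] 0 :=
      (integral_eq_zero_iff_of_nonneg (fun ω => pow_nonneg (hnn ω) q) (hint q)).mp hIq.symm
    have hfl : (fun ω => f ω ^ l) =ᵐ[μ] 0 := by
      filter_upwards [hf0] with ω hω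
      simp only [Pi.zero_apply] at hω ⊢
      have hfz : f ω = 0 := (pow_eq_zero_iff (by omega : q ≠ 0)).mp hω
      rw [hfz]
      exact zero_pow (by omega)
    rw [integral_congr_ae hfl]
    rw [show ∫ _, (0 : Ω → ℝ) _ ∂μ = 0 by simp]
    rw [← hIq, Real.zero_rpow (by positivity), zero_pow (by omega : l ≠ 0)]
  · set Iq := ∫ ω, f ω ^ q ∂μ with hIqdef
    set M := Iq ^ ((1:ℝ)/q) with hM
    have hM0 : 0 < M := Real.rpow_pos_of_pos hIq _
    have hMq : M ^ q = Iq := by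
      rw [hM, ← Real.rpow_natCast (Iq ^ ((1:ℝ)/q)) q, ← Real.rpow_mul hIq0]
      rw [one_div, inv_mul_cancel₀ hq0, Real.rpow_one]
    -- pointwise weighted AM-GM for g := f/M
    have hpt : ∀ ω, (f ω / M) ^ l ≤ ((l:ℝ)/q) * (f ω / M) ^ q + (1 - (l:ℝ)/q) := by
      intro ω
      set u := f ω / M with hu
      have hu0 : 0 ≤ u := div_nonneg (hnn ω) hM0.le
      have hw1 : (0:ℝ) ≤ (l:ℝ)/q := by positivity
      have hw2 : (0:ℝ) ≤ 1 - (l:ℝ)/q := by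
        rw [sub_nonneg, div_le_one (by positivity)]
        exact_mod_cast hlq
      have hgm := Real.geom_mean_le_arith_mean2_weighted hw1 hw2
        (pow_nonneg hu0 q) zero_le_one (by ring)
      have heq : (u ^ q : ℝ) ^ ((l:ℝ)/q) * (1:ℝ) ^ (1 - (l:ℝ)/q) = u ^ l := by
        rw [Real.one_rpow, mul_one, ← Real.rpow_natCast u q, ← Real.rpow_mul hu0]
        rw [show (q:ℝ) * ((l:ℝ)/q) = (l:ℝ) by field_simp]
        rw [Real.rpow_natCast]
      rw [heq] at hgm
      calc u ^ l ≤ (l:ℝ)/q * u ^ q + (1 - (l:ℝ)/q) * 1 := hgm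
        _ = (l:ℝ)/q * u ^ q + (1 - (l:ℝ)/q) := by ring
    -- integrate
    have hgq : ∫ ω, (f ω / M) ^ q ∂μ = 1 := by
      have he : (fun ω => (f ω / M) ^ q) = fun ω => f ω ^ q / M ^ q := by
        funext ω; rw [div_pow]
      rw [he, integral_div, hMq]
      field_simp
      exact hIqdef.symm
    have hgl_int : Integrable (fun ω => (f ω / M) ^ l) μ := by
      have he : (fun ω => (f ω / M) ^ l) = fun ω => f ω ^ l / M ^ l := by
        funext ω; rw [div_pow]
      rw [he]
      exact (hint l).div_const _
    have hgq_int : Integrable (fun ω => (f ω / M) ^ q) μ := by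
      have he : (fun ω => (f ω / M) ^ q) = fun ω => f ω ^ q / M ^ q := by
        funext ω; rw [div_pow]
      rw [he]
      exact (hint q).div_const _
    have hmono : ∫ ω, (f ω / M) ^ l ∂μ ≤ 1 := by
      have h1 : ∫ ω, (f ω / M) ^ l ∂μ
          ≤ ∫ ω, ((l:ℝ)/q * (f ω / M) ^ q + (1 - (l:ℝ)/q)) ∂μ :=
        integral_mono hgl_int ((hgq_int.const_mul _).add (integrable_const _))
          (fun ω => hpt ω)
      rw [integral_add (hgq_int.const_mul _) (integrable_const _), integral_const_mul,
        hgq, integral_const] at h1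
      simpa using h1
    -- conclude
    have hfin : ∫ ω, f ω ^ l ∂μ = (∫ ω, (f ω / M) ^ l ∂μ) * M ^ l := by
      rw [← integral_mul_const]
      apply integral_congr_ae
      filter_upwards with ω
      rw [div_pow, div_mul_cancel₀]
      positivity
    rw [hfin]
    calc (∫ ω, (f ω / M) ^ l ∂μ) * M ^ l ≤ 1 * M ^ l :=
          mul_le_mul_of_nonneg_right hmono (by positivity)
      _ = M ^ l := one_mul _

end MeasureAux2

section MainInduction

open Finset

variable {Ω : Type*} [MeasurableSpace Ω] {μ : Measure Ω} [IsProbabilityMeasure μ]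
variable {n : ℕ} {X : Fin n → Ω → ℝ}

lemma int_phiZ (hX : ∀ i, Measurable (X i))
    (hindep : iIndepFun X μ)
    (hmom : ∀ i, ∀ q : ℝ, 0 < q → Integrable (fun ω => |X i ω| ^ q) μ)
    (S : Finset (Fin n)) (p : ℕ) :
    Integrable (fun ω => (∑ j ∈ S, X j ω) * |∑ j ∈ S, X j ω| ^ p) μ := by
  apply (int_Zpow hX hindep hmom S (p+1)).mono'
    ((meas_Z hX S).mul (((meas_Z hX S).abs).pow_const p)).aestronglyMeasurable
  filter_upwards with ω
  rw [Real.norm_eq_abs, Pi.mul_apply, abs_mul, abs_pow, abs_abs, ← pow_succ']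

lemma int_term (hX : ∀ i, Measurable (X i))
    (hindep : iIndepFun X μ)
    (hmom : ∀ i, ∀ q : ℝ, 0 < q → Integrable (fun ω => |X i ω| ^ q) μ)
    {i : Fin n} {S : Finset (Fin n)} (hiS : i ∈ S) (p : ℕ) :
    Integrable (fun ω => X i ω * ((∑ j ∈ S, X j ω) * |∑ j ∈ S, X j ω| ^ p)) μ := by
  classical
  have hdecomp : ∀ ω : Ω, ∑ j ∈ S, X j ω = X i ω + ∑ j ∈ S.erase i, X j ω :=
    fun ω => (Finset.add_sum_erase S (fun j => X j ω) hiS).symm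
  apply Integrable.mono'
    (g := fun ω => ∑ jj ∈ Finset.range (p+2),
      |X i ω| ^ (jj+1) * |∑ j ∈ S.erase i, X j ω| ^ (p+1-jj) * (((p+1).choose jj : ℕ) : ℝ))
  · apply integrable_finset_sum
    intro jj _
    exact (int_mulZ hX hindep hmom i (S.erase i) (Finset.notMem_erase i S)
      (jj+1) (p+1-jj)).mul_const _
  · exact ((hX i).mul ((meas_Z hX S).mul ((meas_Z hX S).abs.pow_const p))).aestronglyMeasurable
  · filter_upwards with ω
    rw [Real.norm_eq_abs]
    have h1 : |X i ω * ((∑ j ∈ S, X j ω) * |∑ j ∈ S, X j ω| ^ p)|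
        = |X i ω| * |∑ j ∈ S, X j ω| ^ (p+1) := by
      rw [abs_mul, abs_mul, abs_pow, abs_abs, ← pow_succ']
    rw [h1]
    have h2 : |∑ j ∈ S, X j ω| ≤ |X i ω| + |∑ j ∈ S.erase i, X j ω| := by
      rw [hdecomp ω]; exact abs_add_le _ _
    calc |X i ω| * |∑ j ∈ S, X j ω| ^ (p+1)
        ≤ |X i ω| * (|X i ω| + |∑ j ∈ S.erase i, X j ω|) ^ (p+1) :=
          mul_le_mul_of_nonneg_left (pow_le_pow_left₀ (abs_nonneg _) h2 _) (abs_nonneg _)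
      _ = ∑ jj ∈ Finset.range (p+2), |X i ω| ^ (jj+1)
            * |∑ j ∈ S.erase i, X j ω| ^ (p+1-jj) * (((p+1).choose jj : ℕ) : ℝ) := by
          rw [add_pow, Finset.mul_sum]
          refine Finset.sum_congr rfl fun jj _ => ?_
          rw [pow_succ']
          ring

lemma main_induction
    (hX : ∀ i, Measurable (X i))
    (hindep : iIndepFun X μ)
    (hcentered : ∀ i, ∫ ω, X i ω ∂μ = 0)
    (hmom : ∀ i, ∀ q : ℝ, 0 < q → Integrable (fun ω => |X i ω| ^ q) μ)
    (hn : 0 < n) (q : ℕ) (hq : 2 ≤ q)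
    {σ m T : ℝ} (hσ0 : 0 < σ) (hm0 : 0 < m) (hT0 : 0 < T)
    (hσ2 : ∑ i, ∫ ω, (X i ω)^2 ∂μ = σ^2)
    (hmY : ∀ l : ℕ, 1 ≤ l → l ≤ q → ∫ ω, (⨆ j, |X j ω|)^l ∂μ ≤ m^l)
    (hσT : σ ≤ T)
    (hbucket : ∀ k : ℕ, 3 ≤ k → k ≤ q →
      ((k:ℝ) - 1) * (σ^2 * T^(k-2) + 2*(σ^2 + m^2) * ((T+m)^(k-2) - T^(k-2))) ≤ T^k) :
    ∀ k : ℕ, k ≤ q → ∀ S : Finset (Fin n), ∫ ω, |∑ j ∈ S, X j ω|^k ∂μ ≤ T^k := by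
  classical
  intro k
  induction k using Nat.strong_induction_on with
  | _ k IH =>
  intro hkq S
  have hZsq : ∫ ω, |∑ j ∈ S, X j ω|^2 ∂μ ≤ σ^2 := by
    have he : (fun ω => |∑ j ∈ S, X j ω|^2) = fun ω => (∑ j ∈ S, X j ω)^2 := by
      funext ω; rw [sq_abs]
    rw [he, integral_Z_sq hX hindep hcentered hmom S, ← hσ2]
    apply Finset.sum_le_sum_of_subset_of_nonneg (Finset.subset_univ S)
    intro i _ _
    exact integral_nonneg fun ω => sq_nonneg _
  rcases Nat.lt_or_ge k 3 with hk3 | hk3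
  · -- base cases k = 0, 1, 2
    interval_cases k
    · simp
    · -- k = 1
      have hly := lyapunov (f := fun ω => |∑ j ∈ S, X j ω|) (meas_Z hX S).abs
        (fun ω => abs_nonneg _) (fun kk => int_Zpow hX hindep hmom S kk)
        (l := 1) (q := 2) le_rfl one_le_two
      have h2 : ((∫ ω, |∑ j ∈ S, X j ω|^2 ∂μ) ^ ((1:ℝ)/2)) ≤ σ := by
      
        have hnn : 0 ≤ ∫ ω, |∑ j ∈ S, X j ω|^2 ∂μ :=
          integral_nonneg fun ω => pow_nonneg (abs_nonneg _) 2
        have hr := Real.rpow_le_rpow hnn hZsq (by norm_num : (0:ℝ) ≤ 1/2)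
        have hσeq : (σ^2 : ℝ) ^ ((1:ℝ)/2) = σ := by
          rw [← Real.rpow_natCast σ 2, ← Real.rpow_mul hσ0.le]
          norm_num
        rw [hσeq] at hr
        exact hr
      simp only [pow_one] at hly ⊢
      calc ∫ ω, |∑ j ∈ S, X j ω| ∂μ ≤ (∫ ω, |∑ j ∈ S, X j ω|^2 ∂μ) ^ ((1:ℝ)/2) := by
            simpa using hly
        _ ≤ σ := h2
        _ ≤ T := hσT
    · -- k = 2
      calc ∫ ω, |∑ j ∈ S, X j ω|^2 ∂μ ≤ σ^2 := hZsq
        _ ≤ T^2 := pow_le_pow_left₀ hσ0.le hσT 2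
  · -- main inductive step, 3 ≤ k ≤ q
    have hk2 : 2 ≤ k := by omega
    -- step 1: expansion
    have hstep1 : ∫ ω, |∑ j ∈ S, X j ω|^k ∂μ
        = ∑ i ∈ S, ∫ ω, X i ω * ((∑ j ∈ S, X j ω) * |∑ j ∈ S, X j ω|^(k-2)) ∂μ := by
      have hpt : (fun ω => |∑ j ∈ S, X j ω|^k)
          = fun ω => ∑ i ∈ S, X i ω * ((∑ j ∈ S, X j ω) * |∑ j ∈ S, X j ω|^(k-2)) := by
        funext ω
        rw [← Finset.sum_mul]
        have h1 : (∑ i ∈ S, X i ω) * ((∑ j ∈ S, X j ω) * |∑ j ∈ S, X j ω|^(k-2))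
            = |∑ j ∈ S, X j ω|^2 * |∑ j ∈ S, X j ω|^(k-2) := by
          rw [sq_abs]; ring
        rw [h1, ← pow_add]
        congr 1
        omega
      rw [hpt]
      exact integral_finset_sum _ fun i hiS => int_term hX hindep hmom hiS (k-2)
    -- step 2: per-index bound
    have hperi : ∀ i ∈ S, ∫ ω, X i ω * ((∑ j ∈ S, X j ω) * |∑ j ∈ S, X j ω|^(k-2)) ∂μ
        ≤ ((k:ℝ)-1) * ∑ jj ∈ Finset.range (k-1),
            (((k-2).choose jj : ℕ) : ℝ) * (∫ ω, |X i ω|^(jj+2) ∂μ) * T^(k-2-jj) := by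
      intro i hiS
      have hiS' : i ∉ S.erase i := Finset.notMem_erase i S
      have hdecomp : ∀ ω : Ω, ∑ j ∈ S, X j ω = X i ω + ∑ j ∈ S.erase i, X j ω :=
        fun ω => (Finset.add_sum_erase S (fun j => X j ω) hiS).symm
      have hphiZ'int : Integrable (fun ω => (∑ j ∈ S.erase i, X j ω)
          * |∑ j ∈ S.erase i, X j ω|^(k-2)) μ := int_phiZ hX hindep hmom _ _
      have hindc : IndepFun (fun ω => X i ω)
          (fun ω => (∑ j ∈ S.erase i, X j ω) * |∑ j ∈ S.erase i, X j ω|^(k-2)) μ :=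
        indep_sum hX hindep i (S.erase i) hiS' measurable_id
          (measurable_id.mul (measurable_abs.pow_const (k-2)))
      have hprodint : Integrable (fun ω => X i ω * ((∑ j ∈ S.erase i, X j ω)
          * |∑ j ∈ S.erase i, X j ω|^(k-2))) μ :=
        hindc.integrable_mul (int_X hX hmom i) hphiZ'int
      have hzero : ∫ ω, X i ω * ((∑ j ∈ S.erase i, X j ω)
          * |∑ j ∈ S.erase i, X j ω|^(k-2)) ∂μ = 0 := by
        have h := hindc.integral_mul_eq_mul_integral (int_X hX hmom i).aestronglyMeasurable hphiZ'int.aestronglyMeasurable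
        rw [show ∫ ω, X i ω * ((∑ j ∈ S.erase i, X j ω)
              * |∑ j ∈ S.erase i, X j ω|^(k-2)) ∂μ
            = (∫ ω, X i ω ∂μ) * (∫ ω, (∑ j ∈ S.erase i, X j ω)
              * |∑ j ∈ S.erase i, X j ω|^(k-2) ∂μ) from h, hcentered i, zero_mul]
      have hsub : ∫ ω, X i ω * ((∑ j ∈ S, X j ω) * |∑ j ∈ S, X j ω|^(k-2)) ∂μ
          = ∫ ω, (X i ω * ((∑ j ∈ S, X j ω) * |∑ j ∈ S, X j ω|^(k-2))
              - X i ω * ((∑ j ∈ S.erase i, X j ω) * |∑ j ∈ S.erase i, X j ω|^(k-2))) ∂μ := by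
        rw [integral_sub (int_term hX hindep hmom hiS (k-2)) hprodint, hzero, sub_zero]
      rw [hsub]
      have hcast2 : ((k-2:ℕ):ℝ) + 1 = (k:ℝ) - 1 := by
        have h2k : (2:ℕ) ≤ k := by omega
        push_cast [Nat.cast_sub h2k]; ring
      -- pointwise bound
      have hptb : ∀ ω, X i ω * ((∑ j ∈ S, X j ω) * |∑ j ∈ S, X j ω|^(k-2))
            - X i ω * ((∑ j ∈ S.erase i, X j ω) * |∑ j ∈ S.erase i, X j ω|^(k-2))
          ≤ ((k:ℝ)-1) * ∑ jj ∈ Finset.range (k-1),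
              (((k-2).choose jj : ℕ) : ℝ) * (|X i ω|^(jj+2) * |∑ j ∈ S.erase i, X j ω|^(k-2-jj)) := by
        intro ω
        set A := ∑ j ∈ S, X j ω with hA
        set B := ∑ j ∈ S.erase i, X j ω with hB
        have hZZ' : A - B = X i ω := by rw [hA, hB, hdecomp ω]; ring
        have e2 : |A * |A|^(k-2) - B * |B|^(k-2)|
            ≤ ((k:ℝ)-1) * (|X i ω| * (|X i ω| + |B|)^(k-2)) := by
          refine le_trans (phi_lipschitz (k-2) A B) ?_
          have hAXB : A = X i ω + B := by linarith
          have hmax : max |A| |B| ≤ |X i ω| + |B| := by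
            apply max_le
            · rw [hAXB]; exact abs_add_le _ _
            · linarith [abs_nonneg (X i ω)]
          have hpow : max |A| |B| ^ (k-2) ≤ (|X i ω| + |B|)^(k-2) :=
            pow_le_pow_left₀ (le_trans (abs_nonneg A) (le_max_left _ _)) hmax _
          calc (((k-2:ℕ):ℝ) + 1) * |A - B| * max |A| |B| ^ (k-2)
              = ((k:ℝ)-1) * (|X i ω| * max |A| |B| ^ (k-2)) := by
                rw [hcast2, hZZ']; ring
            _ ≤ ((k:ℝ)-1) * (|X i ω| * (|X i ω| + |B|)^(k-2)) := by
                apply mul_le_mul_of_nonneg_left _ (by linarith : (0:ℝ) ≤ (k:ℝ)-1)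
                exact mul_le_mul_of_nonneg_left hpow (abs_nonneg _)
        have e1 : X i ω * (A * |A|^(k-2)) - X i ω * (B * |B|^(k-2))
            ≤ |X i ω| * |A * |A|^(k-2) - B * |B|^(k-2)| := by
          calc X i ω * (A * |A|^(k-2)) - X i ω * (B * |B|^(k-2))
              = X i ω * (A * |A|^(k-2) - B * |B|^(k-2)) := by ring
            _ ≤ |X i ω * (A * |A|^(k-2) - B * |B|^(k-2))| := le_abs_self _
            _ = |X i ω| * |A * |A|^(k-2) - B * |B|^(k-2)| := abs_mul _ _
        have e4 : (|X i ω| + |B|)^(k-2)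
            = ∑ jj ∈ Finset.range (k-1), |X i ω|^jj * |B|^(k-2-jj) * (((k-2).choose jj : ℕ) : ℝ) := by
          rw [add_pow]
          have hr : k - 2 + 1 = k - 1 := by omega
          rw [hr]
        have e5 : |X i ω| * (|X i ω| * (|X i ω| + |B|)^(k-2))
            = ∑ jj ∈ Finset.range (k-1),
                (((k-2).choose jj : ℕ) : ℝ) * (|X i ω|^(jj+2) * |B|^(k-2-jj)) := by
          rw [e4, Finset.mul_sum, Finset.mul_sum]
          refine Finset.sum_congr rfl fun jj _ => ?_
          rw [pow_add]
          ring
        calc X i ω * (A * |A|^(k-2)) - X i ω * (B * |B|^(k-2))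
            ≤ |X i ω| * |A * |A|^(k-2) - B * |B|^(k-2)| := e1
          _ ≤ |X i ω| * (((k:ℝ)-1) * (|X i ω| * (|X i ω| + |B|)^(k-2))) :=
              mul_le_mul_of_nonneg_left e2 (abs_nonneg _)
          _ = ((k:ℝ)-1) * (|X i ω| * (|X i ω| * (|X i ω| + |B|)^(k-2))) := by ring
          _ = ((k:ℝ)-1) * ∑ jj ∈ Finset.range (k-1),
                (((k-2).choose jj : ℕ) : ℝ) * (|X i ω|^(jj+2) * |B|^(k-2-jj)) := by rw [e5]
      -- integrate the pointwise bound
      have hintRHS : Integrable (fun ω => ((k:ℝ)-1) * ∑ jj ∈ Finset.range (k-1),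
          (((k-2).choose jj : ℕ) : ℝ)
            * (|X i ω|^(jj+2) * |∑ j ∈ S.erase i, X j ω|^(k-2-jj))) μ := by
        apply Integrable.const_mul
        apply integrable_finset_sum
        intro jj _
        exact (int_mulZ hX hindep hmom i (S.erase i) hiS' (jj+2) (k-2-jj)).const_mul _
      have hmono := integral_mono
        ((int_term hX hindep hmom hiS (k-2)).sub hprodint) hintRHS hptb
      refine le_trans hmono ?_
      rw [integral_const_mul]
      apply mul_le_mul_of_nonneg_left _ (by
        have : (3:ℝ) ≤ (k:ℝ) := by exact_mod_cast hk3
        linarith)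
      rw [integral_finset_sum _ (fun jj _ =>
        (int_mulZ hX hindep hmom i (S.erase i) hiS' (jj+2) (k-2-jj)).const_mul _)]
      apply Finset.sum_le_sum
      intro jj hjj
      rw [integral_const_mul, integral_mulZ hX hindep hmom i (S.erase i) hiS' (jj+2) (k-2-jj)]
      have hIH : ∫ ω, |∑ j ∈ S.erase i, X j ω|^(k-2-jj) ∂μ ≤ T^(k-2-jj) := by
        apply IH (k-2-jj) (by omega) (by omega)
      have hXnn : 0 ≤ ∫ ω, |X i ω|^(jj+2) ∂μ :=
        integral_nonneg fun ω => pow_nonneg (abs_nonneg _) _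
      have hC : (0:ℝ) ≤ (((k-2).choose jj : ℕ) : ℝ) := Nat.cast_nonneg _
      calc (((k-2).choose jj : ℕ) : ℝ) * ((∫ ω, |X i ω|^(jj+2) ∂μ)
              * (∫ ω, |∑ j ∈ S.erase i, X j ω|^(k-2-jj) ∂μ))
          ≤ (((k-2).choose jj : ℕ) : ℝ) * ((∫ ω, |X i ω|^(jj+2) ∂μ) * T^(k-2-jj)) := by
            apply mul_le_mul_of_nonneg_left _ hC
            exact mul_le_mul_of_nonneg_left hIH hXnn
        _ = (((k-2).choose jj : ℕ) : ℝ) * (∫ ω, |X i ω|^(jj+2) ∂μ) * T^(k-2-jj) := by ring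
    -- step 3: sum over i, swap sums
    have hstep3 : ∫ ω, |∑ j ∈ S, X j ω|^k ∂μ
        ≤ ((k:ℝ)-1) * ∑ jj ∈ Finset.range (k-1),
            (((k-2).choose jj : ℕ) : ℝ) * (∑ i ∈ S, ∫ ω, |X i ω|^(jj+2) ∂μ) * T^(k-2-jj) := by
      rw [hstep1]
      calc ∑ i ∈ S, ∫ ω, X i ω * ((∑ j ∈ S, X j ω) * |∑ j ∈ S, X j ω|^(k-2)) ∂μ
          ≤ ∑ i ∈ S, ((k:ℝ)-1) * ∑ jj ∈ Finset.range (k-1),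
              (((k-2).choose jj : ℕ) : ℝ) * (∫ ω, |X i ω|^(jj+2) ∂μ) * T^(k-2-jj) :=
            Finset.sum_le_sum hperi
        _ = ((k:ℝ)-1) * ∑ jj ∈ Finset.range (k-1),
              (((k-2).choose jj : ℕ) : ℝ) * (∑ i ∈ S, ∫ ω, |X i ω|^(jj+2) ∂μ) * T^(k-2-jj) := by
            rw [← Finset.mul_sum, Finset.sum_comm]
            congr 1
            refine Finset.sum_congr rfl fun jj _ => ?_
            simp only [Finset.mul_sum, Finset.sum_mul, mul_assoc]
    -- step 4: bound the moment sums
    have hWj : ∀ jj : ℕ, 1 ≤ jj → jj ≤ k - 2 →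
        (∑ i ∈ S, ∫ ω, |X i ω|^(jj+2) ∂μ) ≤ 2*(σ^2+m^2)*m^jj := by
      intro jj hjj1 hjj2
      have hsubset : (∑ i ∈ S, ∫ ω, |X i ω|^(jj+2) ∂μ)
          ≤ ∑ i, ∫ ω, |X i ω|^(jj+2) ∂μ := by
        apply Finset.sum_le_sum_of_subset_of_nonneg (Finset.subset_univ S)
        intro i _ _
        exact integral_nonneg fun ω => pow_nonneg (abs_nonneg _) _
      set t : ℝ := min σ m with ht
      have ht0 : 0 < t := lt_min hσ0 hm0
      have hsml := sum_moment_le hX hindep hmom hn (jj+2) (by omega) ht0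
      rw [hσ2] at hsml
      have hYle : ∫ ω, (⨆ j, |X j ω|)^(jj+2) ∂μ ≤ m^(jj+2) := hmY (jj+2) (by omega) (by omega)
      have hYnn : 0 ≤ ∫ ω, (⨆ j, |X j ω|)^(jj+2) ∂μ :=
        integral_nonneg fun ω => pow_nonneg (Y_nonneg ω) _
      have hexp : jj + 2 - 2 = jj := by omega
      rw [hexp] at hsml
      -- t^jj * σ^2 ≤ σ^2 * m^jj
      have h1 : t^jj * σ^2 ≤ σ^2 * m^jj := by
        have : t^jj ≤ m^jj := pow_le_pow_left₀ ht0.le (min_le_right _ _) jj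
        nlinarith [sq_nonneg σ]
      -- EY * (σ^2/t^2) ≤ σ^2*m^jj + m^(jj+2)
      have h2 : (∫ ω, (⨆ j, |X j ω|)^(jj+2) ∂μ) * (σ^2/t^2) ≤ σ^2*m^jj + m^(jj+2) := by
        have hEYt : (∫ ω, (⨆ j, |X j ω|)^(jj+2) ∂μ) * (σ^2/t^2) ≤ m^(jj+2) * (σ^2/t^2) := by
          apply mul_le_mul_of_nonneg_right hYle
          positivity
        rcases le_total m σ with hmσ | hσm
        · have htm : t = m := min_eq_right hmσ
          rw [htm] at hEYt ⊢
          have : m^(jj+2) * (σ^2/m^2) = σ^2 * m^jj := by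
            field_simp
            ring
          rw [this] at hEYt
          have : 0 ≤ m^(jj+2) := by positivity
          linarith
        · have htσ : t = σ := min_eq_left hσm
          rw [htσ] at hEYt ⊢
          have : m^(jj+2) * (σ^2/σ^2) = m^(jj+2) := by
            field_simp
          rw [this] at hEYt
          have h0 : 0 ≤ σ^2 * m^jj := by positivity
          linarith
      have hfin : (∑ i, ∫ ω, |X i ω|^(jj+2) ∂μ) ≤ 2*σ^2*m^jj + 2*m^(jj+2) := by
        calc (∑ i, ∫ ω, |X i ω|^(jj+2) ∂μ)
            ≤ t^jj * σ^2 + (∫ ω, (⨆ j, |X j ω|)^(jj+2) ∂μ) * (σ^2/t^2)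
              + ∫ ω, (⨆ j, |X j ω|)^(jj+2) ∂μ := hsml
          _ ≤ σ^2*m^jj + (σ^2*m^jj + m^(jj+2)) + m^(jj+2) := by
              apply add_le_add (add_le_add h1 h2) hYle
          _ = 2*σ^2*m^jj + 2*m^(jj+2) := by ring
      calc (∑ i ∈ S, ∫ ω, |X i ω|^(jj+2) ∂μ) ≤ ∑ i, ∫ ω, |X i ω|^(jj+2) ∂μ := hsubset
        _ ≤ 2*σ^2*m^jj + 2*m^(jj+2) := hfin
        _ = 2*(σ^2+m^2)*m^jj := by ring
    have hW0 : (∑ i ∈ S, ∫ ω, |X i ω|^2 ∂μ) ≤ σ^2 := by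
      rw [← hσ2]
      have he : ∀ i : Fin n, ∫ ω, |X i ω|^2 ∂μ = ∫ ω, (X i ω)^2 ∂μ := by
        intro i; congr 1; funext ω; rw [sq_abs]
      calc (∑ i ∈ S, ∫ ω, |X i ω|^2 ∂μ) = ∑ i ∈ S, ∫ ω, (X i ω)^2 ∂μ :=
            Finset.sum_congr rfl fun i _ => he i
        _ ≤ ∑ i, ∫ ω, (X i ω)^2 ∂μ := by
            apply Finset.sum_le_sum_of_subset_of_nonneg (Finset.subset_univ S)
            intro i _ _
            exact integral_nonneg fun ω => sq_nonneg _
    -- step 5: termwise bound and resummation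
    have hstep5 : ∑ jj ∈ Finset.range (k-1),
          (((k-2).choose jj : ℕ) : ℝ) * (∑ i ∈ S, ∫ ω, |X i ω|^(jj+2) ∂μ) * T^(k-2-jj)
        ≤ σ^2 * T^(k-2) + 2*(σ^2 + m^2) * ((T+m)^(k-2) - T^(k-2)) := by
      have hterm : ∀ jj ∈ Finset.range (k-1),
          (((k-2).choose jj : ℕ) : ℝ) * (∑ i ∈ S, ∫ ω, |X i ω|^(jj+2) ∂μ) * T^(k-2-jj)
          ≤ (((k-2).choose jj : ℕ) : ℝ)
              * (if jj = 0 then σ^2 else 2*(σ^2+m^2)*m^jj) * T^(k-2-jj) := by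
        intro jj hjj
        rcases Nat.eq_zero_or_pos jj with h0 | hpos
        · subst h0
          simp only [if_pos rfl]
          apply mul_le_mul_of_nonneg_right _ (by positivity)
          apply mul_le_mul_of_nonneg_left _ (Nat.cast_nonneg _)
          simpa using hW0
        · rw [if_neg (by omega)]
          apply mul_le_mul_of_nonneg_right _ (by positivity)
          apply mul_le_mul_of_nonneg_left _ (Nat.cast_nonneg _)
          exact hWj jj hpos (by
            have := Finset.mem_range.mp hjj
            omega)
      refine le_trans (Finset.sum_le_sum hterm) (le_of_eq ?_)
      -- resummation identity
      have hk1 : k - 1 = (k-2) + 1 := by omega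
      rw [hk1, Finset.sum_range_succ']
      have hadd := add_pow m T (k-2)
      rw [Finset.sum_range_succ'] at hadd
      simp only [pow_zero, Nat.choose_zero_right, Nat.cast_one, mul_one, one_mul,
        Nat.sub_zero, eq_self_iff_true, if_true] at hadd ⊢
      have hS2 : ∑ jj ∈ Finset.range (k-2),
          m^(jj+1) * T^(k-2-(jj+1)) * (((k-2).choose (jj+1) : ℕ) : ℝ)
          = (m+T)^(k-2) - T^(k-2) := by
        linarith [hadd]
      have hifs : ∀ jj ∈ Finset.range (k-2),
          (((k-2).choose (jj+1) : ℕ) : ℝ)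
              * (if jj + 1 = 0 then σ^2 else 2*(σ^2+m^2)*m^(jj+1)) * T^(k-2-(jj+1))
          = 2*(σ^2+m^2) * (m^(jj+1) * T^(k-2-(jj+1)) * (((k-2).choose (jj+1) : ℕ) : ℝ)) := by
        intro jj _
        rw [if_neg (by omega)]
        ring
      rw [Finset.sum_congr rfl hifs, ← Finset.mul_sum, hS2]
      have hTm : (m + T) = (T + m) := by ring
      rw [hTm]
      ring
    -- conclude via bucket hypothesis
    calc ∫ ω, |∑ j ∈ S, X j ω|^k ∂μ
        ≤ ((k:ℝ)-1) * ∑ jj ∈ Finset.range (k-1),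
            (((k-2).choose jj : ℕ) : ℝ) * (∑ i ∈ S, ∫ ω, |X i ω|^(jj+2) ∂μ) * T^(k-2-jj) :=
          hstep3
      _ ≤ ((k:ℝ)-1) * (σ^2 * T^(k-2) + 2*(σ^2 + m^2) * ((T+m)^(k-2) - T^(k-2))) := by
          apply mul_le_mul_of_nonneg_left hstep5
          have : (3:ℝ) ≤ (k:ℝ) := by exact_mod_cast hk3
          linarith
      _ ≤ T^k := hbucket k hk3 hkq

end MainInduction

end Rosenthal9


/-- **Theorem 9** (Rosenthal-type inequality for sums of independent centered random
variables). With `Z = ∑ Xᵢ`, `σ² = ∑ E[Xᵢ²]` and `Y = maxᵢ |Xᵢ|`, for every integer `q ≥ 2`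
and `θ ∈ (0,1)`, `‖Z₊‖_q ≤ σ √(2 κ (2+θ) q) + q κ √(1 + 1/θ) ‖Y‖_q`. -/
theorem theorem9_rosenthal_centered
    {Ω : Type*} [MeasurableSpace Ω]
    (μ : Measure Ω) [IsProbabilityMeasure μ] (n : ℕ) (hn : 0 < n)
    (X : Fin n → Ω → ℝ)
    (hX : ∀ i, Measurable (X i))
    (hcentered : ∀ i, ∫ ω, X i ω ∂μ = 0)
    (hindep : iIndepFun X μ)
    (Z : Ω → ℝ) (hZ : Z = fun ω => ∑ i, X i ω)
    (σ : ℝ) (hσnonneg : 0 ≤ σ) (hσ : σ ^ 2 = ∑ i, ∫ ω, X i ω ^ 2 ∂μ)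
    (Y : Ω → ℝ) (hY : Y = fun ω => ⨆ i, |X i ω|)
    -- all indicated expectations are assumed finite
    (hmom : ∀ i, ∀ q : ℝ, 0 < q → Integrable (fun ω => |X i ω| ^ q) μ)
    (κ : ℝ) (hκ : κ = Real.sqrt (Real.exp 1) / (2 * (Real.sqrt (Real.exp 1) - 1)))
    (q : ℕ) (hq : 2 ≤ q) (θ : ℝ) (hθ : θ ∈ Set.Ioo (0 : ℝ) 1) :
    lqNorm μ (fun ω => max (Z ω) 0) q ≤
      σ * Real.sqrt (2 * κ * (2 + θ) * q) +
        q * κ * Real.sqrt (1 + 1 / θ) * lqNorm μ Y q := by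
  classical
  obtain ⟨hθ0, hθ1⟩ := hθ
  subst hZ
  subst hY
  have hκ127 : (1.27:ℝ) ≤ κ := by rw [hκ]; exact Rosenthal9.kappa_lb
  have hκ0 : (0:ℝ) < κ := by linarith
  have hq2 : (2:ℝ) ≤ (q:ℝ) := by exact_mod_cast hq
  have hq0 : (0:ℝ) < (q:ℝ) := by linarith
  have hqne : (q:ℝ) ≠ 0 := by positivity
  have hθ1' : (0:ℝ) < 1 + 1/θ := by
    have := one_div_pos.mpr hθ0
    linarith
  have hsqrt2pos : 0 < Real.sqrt (1 + 1/θ) := Real.sqrt_pos.mpr hθ1'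
  have hlqY_nonneg : 0 ≤ lqNorm μ (fun ω => ⨆ i, |X i ω|) q := by
    apply Real.rpow_nonneg
    exact integral_nonneg fun ω => Real.rpow_nonneg (abs_nonneg _) _
  rcases eq_or_lt_of_le hσnonneg with hσ0 | hσ0
  · -- degenerate case σ = 0
    have hsum0 : ∑ i, ∫ ω, (X i ω)^2 ∂μ = 0 := by rw [← hσ, ← hσ0]; norm_num
    have hae : ∀ᵐ ω ∂μ, ∀ i, X i ω = 0 := by
      rw [MeasureTheory.ae_all_iff]
      intro i
      have hnn : ∀ j : Fin n, (j ∈ Finset.univ) → 0 ≤ ∫ ω, (X j ω)^2 ∂μ :=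
        fun j _ => integral_nonneg fun ω => sq_nonneg _
      have hterm0 : ∫ ω, (X i ω)^2 ∂μ = 0 :=
        (Finset.sum_eq_zero_iff_of_nonneg hnn).mp hsum0 i (Finset.mem_univ i)
      have h0 := (integral_eq_zero_iff_of_nonneg (fun ω => sq_nonneg _)
        (Rosenthal9.intX2 hX hmom i)).mp hterm0
      filter_upwards [h0] with ω hω
      have : (X i ω)^2 = 0 := hω
      exact (pow_eq_zero_iff (two_ne_zero)).mp this
    have hLHS : lqNorm μ (fun ω => max (∑ i, X i ω) 0) q = 0 := by
      simp only [lqNorm]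
      have hz : (fun ω => |max (∑ i, X i ω) 0| ^ (q:ℝ)) =ᵐ[μ] 0 := by
        filter_upwards [hae] with ω hω
        rw [Finset.sum_eq_zero (fun i _ => hω i)]
        simp only [max_self, abs_zero, Pi.zero_apply]
        exact Real.zero_rpow hqne
      rw [integral_congr_ae hz]
      rw [show (∫ _, (0 : Ω → ℝ) _ ∂μ) = 0 by simp]
      exact Real.zero_rpow (by positivity)
    rw [hLHS, ← hσ0, zero_mul, zero_add]
    apply mul_nonneg _ hlqY_nonneg
    positivity
  · -- main case σ > 0
    set IY := ∫ ω, (⨆ j, |X j ω|)^q ∂μ with hIY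
    have hIYnn : 0 ≤ IY := integral_nonneg fun ω => pow_nonneg (Rosenthal9.Y_nonneg ω) q
    have hIY0 : 0 < IY := by
      rcases eq_or_lt_of_le hIYnn with h0 | h0
      · exfalso
        have hY0 : (fun ω => (⨆ j, |X j ω|)^q) =ᵐ[μ] 0 :=
          (integral_eq_zero_iff_of_nonneg (fun ω => pow_nonneg (Rosenthal9.Y_nonneg ω) q)
            (Rosenthal9.int_Ypow hX hmom hn q)).mp h0.symm
        have hzero : ∀ i : Fin n, ∫ ω, (X i ω)^2 ∂μ = 0 := by
          intro i
          rw [integral_eq_zero_iff_of_nonneg (fun ω => sq_nonneg _)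
            (Rosenthal9.intX2 hX hmom i)]
          filter_upwards [hY0] with ω hω
          have hYz : (⨆ j, |X j ω|) = 0 := by
            have : ((⨆ j, |X j ω|):ℝ)^q = 0 := hω
            exact (pow_eq_zero_iff (by omega : q ≠ 0)).mp this
          have hXle : |X i ω| ≤ 0 := hYz ▸ Rosenthal9.le_Y hn i ω
          have : X i ω = 0 := abs_eq_zero.mp (le_antisymm hXle (abs_nonneg _))
          simp [this]
        have : σ^2 = 0 := by
          rw [hσ]
          exact Finset.sum_eq_zero fun i _ => hzero i
        nlinarith
      · exact h0
    set m := IY ^ ((1:ℝ)/q) with hm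
    have hm0 : 0 < m := Real.rpow_pos_of_pos hIY0 _
    have hmY : ∀ l : ℕ, 1 ≤ l → l ≤ q → ∫ ω, (⨆ j, |X j ω|)^l ∂μ ≤ m^l := by
      intro l hl hlq
      exact Rosenthal9.lyapunov (Rosenthal9.Y_meas hX) Rosenthal9.Y_nonneg
        (fun kk => Rosenthal9.int_Ypow hX hmom hn kk) hl hlq
    have hlq_eq : lqNorm μ (fun ω => ⨆ i, |X i ω|) q = m := by
      simp only [lqNorm, hm, hIY]
      congr 1
      apply integral_congr_ae
      filter_upwards with ω
      rw [abs_of_nonneg (Rosenthal9.Y_nonneg ω), Real.rpow_natCast]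
    set A := Real.sqrt (2*κ*(2+θ)*q) with hA
    set B := (q:ℝ)*κ*Real.sqrt (1+1/θ) with hB
    have hargpos : (0:ℝ) < 2*κ*(2+θ)*q :=
      mul_pos (mul_pos (mul_pos (by norm_num) hκ0) (by linarith)) hq0
    have hA0 : 0 < A := Real.sqrt_pos.mpr hargpos
    have hA2 : A^2 = 2*κ*(2+θ)*q := Real.sq_sqrt hargpos.le
    have hA1 : 1 ≤ A := by
      have e1 : (2.54:ℝ) ≤ 2*κ := by linarith
      have e2 : (5.08:ℝ) ≤ 2*κ*(2+θ) := by nlinarith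
      have e3 : (10.16:ℝ) ≤ 2*κ*(2+θ)*q := by nlinarith
      nlinarith [hA2, hA0]
    have hB0 : 0 < B := mul_pos (mul_pos hq0 hκ0) hsqrt2pos
    set T := A*σ + B*m with hT
    have hT0 : 0 < T := by nlinarith [mul_pos hA0 hσ0, mul_pos hB0 hm0]
    have hσT : σ ≤ T := by nlinarith [mul_pos hB0 hm0, mul_le_mul_of_nonneg_right hA1 hσ0.le]
    have hbucket : ∀ k : ℕ, 3 ≤ k → k ≤ q →
        ((k:ℝ) - 1) * (σ^2 * T^(k-2) + 2*(σ^2 + m^2) * ((T+m)^(k-2) - T^(k-2))) ≤ T^k := by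
      intro k hk3 hkq
      have hx0 : 0 ≤ σ/T := by positivity
      have hy0 : 0 ≤ m/T := by positivity
      have hxA : (σ/T)^2*(2*κ*(2+θ)*q) ≤ 1 := by
        rw [← hA2, div_pow, div_mul_eq_mul_div, div_le_one (pow_pos hT0 2)]
        have h1 : A*σ ≤ T := by nlinarith [mul_pos hB0 hm0]
        calc σ^2*A^2 = (A*σ)^2 := by ring
          _ ≤ T^2 := pow_le_pow_left₀ (by positivity) h1 2
      have hyB : (m/T)*(κ*Real.sqrt (1+1/θ)*q) ≤ 1 := by
        rw [div_mul_eq_mul_div, div_le_one hT0]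
        have h1 : B*m ≤ T := by nlinarith [mul_pos hA0 hσ0]
        calc m*(κ*Real.sqrt (1+1/θ)*q) = B*m := by rw [hB]; ring
          _ ≤ T := h1
      have hkey := Rosenthal9.key_num hκ127 hθ0 hθ1 hq hk3 hkq hx0 hy0 hxA hyB
      have hexp : T^2 * T^(k-2) = T^k := by rw [← pow_add]; congr 1; omega
      have hσx : σ = (σ/T)*T := by field_simp
      have hmy : m = (m/T)*T := by field_simp
      calc ((k:ℝ)-1)*(σ^2*T^(k-2) + 2*(σ^2+m^2)*((T+m)^(k-2) - T^(k-2)))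
          = (((k:ℝ)-1)*((σ/T)^2 + 2*((σ/T)^2+(m/T)^2)*((1+m/T)^(k-2) - 1))) * (T^2*T^(k-2)) := by
            rw [show T + m = (1 + m/T)*T by field_simp]
            rw [mul_pow]
            field_simp
        _ ≤ 1 * (T^2*T^(k-2)) := by
            apply mul_le_mul_of_nonneg_right hkey (by positivity)
        _ = T^k := by rw [one_mul, hexp]
    have hmain := Rosenthal9.main_induction hX hindep hcentered hmom hn q hq
      hσ0 hm0 hT0 hσ.symm hmY hσT hbucket q le_rfl Finset.univ
    -- final conversion
    have hfe : (fun ω => |max (∑ i, X i ω) 0| ^ (q:ℝ))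
        = fun ω => (max (∑ i, X i ω) 0)^q := by
      funext ω
      rw [abs_of_nonneg (le_max_right _ _), Real.rpow_natCast]
    have hptle : ∀ ω : Ω, (max (∑ i, X i ω) 0)^q ≤ |∑ i, X i ω| ^ q := fun ω =>
      pow_le_pow_left₀ (le_max_right _ _) (max_le (le_abs_self _) (abs_nonneg _)) q
    have hIntLHS : Integrable (fun ω => (max (∑ i, X i ω) 0)^q) μ := by
      apply (Rosenthal9.int_Zpow hX hindep hmom Finset.univ q).mono'
        (((Rosenthal9.meas_Z hX Finset.univ).max measurable_const).pow_const
          q).aestronglyMeasurable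
      filter_upwards with ω
      rw [Real.norm_eq_abs,
        abs_of_nonneg (pow_nonneg (le_max_right _ _) q)]
      exact hptle ω
    have hZq : ∫ ω, (max (∑ i, X i ω) 0)^q ∂μ ≤ T^q :=
      le_trans (integral_mono hIntLHS
        (Rosenthal9.int_Zpow hX hindep hmom Finset.univ q) hptle) hmain
    have h1 : lqNorm μ (fun ω => max (∑ i, X i ω) 0) q ≤ ((T:ℝ)^q)^((1:ℝ)/q) := by
      simp only [lqNorm]
      rw [hfe]
      exact Real.rpow_le_rpow
        (integral_nonneg fun ω => pow_nonneg (le_max_right _ _) q) hZq (by positivity)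
    have h2 : ((T:ℝ)^q)^((1:ℝ)/q) = T := by
      rw [← Real.rpow_natCast T q, ← Real.rpow_mul hT0.le, mul_one_div, div_self hqne,
        Real.rpow_one]
    rw [hlq_eq]
    calc lqNorm μ (fun ω => max (∑ i, X i ω) 0) q ≤ ((T:ℝ)^q)^((1:ℝ)/q) := h1
      _ = T := h2
      _ = σ * A + B * m := by rw [hT]; ring
end
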